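/- arXiv:2002.12903 — 6 statements merged into one kernel-verified Lean document; each statement's English description precedes it below -/
import Mathlib

section
/- Let (Aₙ, Bₙ) be a sequence of random variables with values in ℝ × ℝ^k such that (Aₙ, Bₙ) converges in distribution to (A, B) and Aₙ has the same distribution as A for every n. Then for any bounded measurable function f : ℝ × ℝ^k → ℝ such that b ↦ f(a, b) is continuous for every fixed a, we have E[f(Aₙ, Bₙ)] → E[f(A, B)]. -/
open MeasureTheory Filter BoundedContinuousFunction
open scoped ProbabilityTheory

open Set Metric in
/-- A map into a separable metric space is measurable provided all distance functions to
fixed points are measurable. -/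
lemma aux_measurable_of_dist {X E : Type*} [MeasurableSpace X] [MetricSpace E]
    [TopologicalSpace.SeparableSpace E] [MeasurableSpace E] [BorelSpace E] {F : X → E}
    (h : ∀ e : E, Measurable fun x => dist (F x) e) : Measurable F := by
  obtain ⟨D, Dcount, Ddense⟩ := TopologicalSpace.exists_countable_dense E
  apply measurable_of_isOpen
  intro U hU
  have hEq : F ⁻¹' U =
      ⋃ p ∈ {p : E × ℚ | p.1 ∈ D ∧ Metric.ball p.1 (p.2 : ℝ) ⊆ U},
        F ⁻¹' Metric.ball p.1 (p.2 : ℝ) := by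
    apply Subset.antisymm
    · intro x hx
      obtain ⟨ε, hε, hball⟩ := Metric.isOpen_iff.1 hU (F x) hx
      obtain ⟨e, heb, heD⟩ := (Metric.dense_iff.1 Ddense) (F x) (ε / 3) (by linarith)
      obtain ⟨q, hq1, hq2⟩ := exists_rat_btwn (show ε / 3 < ε / 2 by linarith)
      have hsub : Metric.ball e (q : ℝ) ⊆ U := by
        intro y hy
        apply hball
        have h1 : dist y e < (q : ℝ) := Metric.mem_ball.1 hy
        have h2 : dist (F x) e < ε / 3 := Metric.mem_ball'.1 heb
        have : dist y (F x) ≤ dist y e + dist e (F x) := dist_triangle _ _ _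
        rw [dist_comm e (F x)] at this
        exact Metric.mem_ball.2 (by linarith)
      refine mem_iUnion₂.2 ⟨(e, q), ⟨heD, hsub⟩, ?_⟩
      have h2 : dist (F x) e < ε / 3 := Metric.mem_ball'.1 heb
      exact Metric.mem_ball.2 (by linarith)
    · refine iUnion₂_subset fun p hp => ?_
      exact fun x hx => hp.2 hx
  rw [hEq]
  refine MeasurableSet.biUnion ?_ ?_
  · refine Set.Countable.mono ?_ (Dcount.prod (Set.countable_univ (α := ℚ)))
    intro p hp
    exact Set.mem_prod.2 ⟨hp.1, Set.mem_univ _⟩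
  · intro p hp
    have : F ⁻¹' Metric.ball p.1 (p.2 : ℝ) = (fun x => dist (F x) p.1) ⁻¹' Set.Iio (p.2 : ℝ) := by
      ext x; simp [Metric.mem_ball]
    rw [this]
    exact h p.1 measurableSet_Iio

lemma aux_clip_bound {M t : ℝ} (hM : 0 ≤ M) : |max (-M) (min M t)| ≤ M := by
  rw [abs_le]
  constructor
  · exact le_max_left _ _
  · exact max_le (by linarith) (min_le_left _ _)

lemma aux_clip_dist {M s t : ℝ} (hs : |s| ≤ M) : |s - max (-M) (min M t)| ≤ |s - t| := by
  have h1 := abs_le.1 hs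
  have hM : (0 : ℝ) ≤ M := le_trans (abs_nonneg s) hs
  rcases le_total t (-M) with h | h
  · rw [min_eq_right (h.trans (by linarith)), max_eq_left h]
    calc |s - (-M)| = s - (-M) := abs_of_nonneg (by linarith [h1.1])
      _ ≤ s - t := by linarith
      _ ≤ |s - t| := le_abs_self _
  · rcases le_total M t with h2 | h2
    · rw [min_eq_left h2, max_eq_right (by linarith : (-M) ≤ M)]
      calc |s - M| = -(s - M) := abs_of_nonpos (by linarith [h1.2])
        _ ≤ -(s - t) := by linarith
        _ ≤ |s - t| := neg_le_abs _
    · rw [min_eq_right h2, max_eq_right h]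

/-- If `(Aₙ, Bₙ)` converges in distribution to `(A, B)` in `ℝ × ℝ^k` and `Aₙ` has the
same law as `A` for every `n`, then for any bounded measurable `f : ℝ × ℝ^k → ℝ` that
is continuous in its second argument for each fixed first argument,
`E[f(Aₙ, Bₙ)] → E[f(A, B)]`. -/
theorem stmt_2 {k : ℕ} {Ω : Type*} [MeasureSpace Ω] [IsProbabilityMeasure (ℙ : Measure Ω)]
    (A : ℕ → Ω → ℝ) (B : ℕ → Ω → EuclideanSpace ℝ (Fin k))
    (A₀ : Ω → ℝ) (B₀ : Ω → EuclideanSpace ℝ (Fin k))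
    (hAmeas : ∀ n, Measurable (A n)) (hBmeas : ∀ n, Measurable (B n))
    (hA₀meas : Measurable A₀) (hB₀meas : Measurable B₀)
    (hconv : ∀ g : (ℝ × EuclideanSpace ℝ (Fin k)) →ᵇ ℝ,
      Tendsto (fun n => ∫ ω, g (A n ω, B n ω)) atTop (nhds (∫ ω, g (A₀ ω, B₀ ω))))
    (hAlaw : ∀ n, Measure.map (A n) ℙ = Measure.map A₀ ℙ)
    (f : ℝ × EuclideanSpace ℝ (Fin k) → ℝ)
    (hfmeas : Measurable f)
    (hfbdd : ∃ M : ℝ, ∀ z, |f z| ≤ M)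
    (hfcont : ∀ a, Continuous fun b => f (a, b)) :
    Tendsto (fun n => ∫ ω, f (A n ω, B n ω)) atTop (nhds (∫ ω, f (A₀ ω, B₀ ω))) := by
  classical
  let E := EuclideanSpace ℝ (Fin k)
  obtain ⟨M₀, hM₀⟩ := hfbdd
  set M : ℝ := max M₀ 0 with hMdef
  have hM0 : (0 : ℝ) ≤ M := le_max_right _ _
  have hfM : ∀ z, |f z| ≤ M := fun z => (hM₀ z).trans (le_max_left _ _)
  refine Metric.tendsto_nhds.2 fun ε hε => ?_
  set δ : ℝ := ε / 4 with hδdef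
  set δ' : ℝ := ε / (4 * (6 * M + 1)) with hδ'def
  have hδpos : 0 < δ := by positivity
  have hδ'pos : 0 < δ' := by positivity
  -- choose the truncation level m
  have hθlim : Tendsto (fun m : ℕ => ∫ ω, min 1 (max (‖B₀ ω‖ - (m : ℝ)) 0) ∂ℙ) atTop
      (nhds 0) := by
    have hDC : Tendsto (fun m : ℕ => ∫ ω, min 1 (max (‖B₀ ω‖ - (m : ℝ)) 0) ∂ℙ) atTop
        (nhds (∫ (_ : Ω), (0 : ℝ) ∂ℙ)) := by
      apply tendsto_integral_of_dominated_convergence (bound := fun _ => (1 : ℝ))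
      · intro m
        exact (measurable_const.min ((hB₀meas.norm.sub measurable_const).max
          measurable_const)).aestronglyMeasurable
      · exact integrable_const _
      · intro m
        refine Eventually.of_forall fun ω => ?_
        rw [Real.norm_eq_abs, abs_le]
        constructor
        · have : (0 : ℝ) ≤ min 1 (max (‖B₀ ω‖ - (m : ℝ)) 0) :=
            le_min zero_le_one (le_max_right _ _)
          linarith
        · exact min_le_left _ _
      · refine Eventually.of_forall fun ω => ?_
        have hev : ∀ᶠ (m : ℕ) in atTop, min 1 (max (‖B₀ ω‖ - (m : ℝ)) 0) = 0 := by
          filter_upwards [eventually_ge_atTop ⌈‖B₀ ω‖⌉₊] with m hm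
          have h1 : ‖B₀ ω‖ ≤ (m : ℝ) :=
            le_trans (Nat.le_ceil _) (by exact_mod_cast hm)
          rw [max_eq_right (by linarith), min_eq_right zero_le_one]
        exact Tendsto.congr' (hev.mono fun m h => h.symm) tendsto_const_nhds
    simpa using hDC
  obtain ⟨m, hm⟩ := (hθlim.eventually (gt_mem_nhds hδ'pos)).exists
  -- set up the compact ball and the space of continuous functions on it
  set S : ℝ := (m : ℝ) + 1 with hSdef
  have hSpos : 0 < S := by positivity
  set K : Set E := Metric.closedBall 0 S with hKdef
  haveI : CompactSpace ↥K := isCompact_iff_compactSpace.mp (isCompact_closedBall 0 S)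
  borelize C(↥K, ℝ)
  set θ : E → ℝ := fun b => min 1 (max (‖b‖ - (m : ℝ)) 0) with hθdef
  have hθcont : Continuous θ :=
    continuous_const.min ((continuous_norm.sub continuous_const).max continuous_const)
  have hθ01 : ∀ b, 0 ≤ θ b ∧ θ b ≤ 1 := fun b =>
    ⟨le_min zero_le_one (le_max_right _ _), min_le_left _ _⟩
  have hθ1 : ∀ b : E, S < ‖b‖ → θ b = 1 := by
    intro b hb
    rw [hθdef]
    simp only
    rw [max_eq_left (by simp only [hSdef] at hb; linarith), min_eq_left (by
      simp only [hSdef] at hb; linarith)]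
  -- the Carathéodory map into C(K, ℝ)
  set F : ℝ → C(↥K, ℝ) := fun a =>
    ⟨fun x => f (a, (x : E)), (hfcont a).comp continuous_subtype_val⟩ with hFdef
  have hFnorm : ∀ a, ‖F a‖ ≤ M := by
    intro a
    refine (ContinuousMap.norm_le _ hM0).2 fun x => ?_
    rw [Real.norm_eq_abs]
    exact hfM _
  have hFdist : ∀ h : C(↥K, ℝ), Measurable fun a => dist (F a) h := by
    intro h
    apply measurable_of_Iic
    intro r
    rcases lt_or_ge r 0 with hr | hr
    · have : (fun a => dist (F a) h) ⁻¹' Set.Iic r = ∅ := by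
        ext a
        simp only [Set.mem_preimage, Set.mem_Iic, Set.mem_empty_iff_false, iff_false, not_le]
        exact lt_of_lt_of_le hr dist_nonneg
      rw [this]; exact MeasurableSet.empty
    · obtain ⟨D, Dcount, Ddense⟩ := TopologicalSpace.exists_countable_dense ↥K
      have hEq : (fun a => dist (F a) h) ⁻¹' Set.Iic r =
          ⋂ x ∈ D, {a : ℝ | dist (f (a, (x : E))) (h x) ≤ r} := by
        ext a
        simp only [Set.mem_preimage, Set.mem_Iic, Set.mem_iInter, Set.mem_setOf_eq]
        constructor
        · intro hd x _
          exact le_trans (ContinuousMap.dist_apply_le_dist (f := F a) (g := h) x) hd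
        · intro hall
          rw [ContinuousMap.dist_le hr]
          intro x
          have hcl : IsClosed {x : ↥K | dist (F a x) (h x) ≤ r} :=
            isClosed_le ((F a).continuous.dist h.continuous) continuous_const
          have hsub : closure D ⊆ {x : ↥K | dist (F a x) (h x) ≤ r} :=
            hcl.closure_subset_iff.2 fun x hx => hall x hx
          have := hsub (by rw [Ddense.closure_eq]; exact Set.mem_univ x)
          exact this
      rw [hEq]
      refine MeasurableSet.biInter Dcount fun x _ => ?_
      exact measurableSet_le ((hfmeas.comp
        (measurable_id.prodMk measurable_const)).dist measurable_const) measurable_const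
  have hFmeas : Measurable F := aux_measurable_of_dist hFdist
  -- law of A₀
  set μ : Measure ℝ := Measure.map A₀ ℙ with hμdef
  haveI : IsProbabilityMeasure μ := Measure.isProbabilityMeasure_map hA₀meas.aemeasurable
  have hFint : Integrable F μ :=
    ⟨hFmeas.stronglyMeasurable.aestronglyMeasurable,
      HasFiniteIntegral.of_bounded (C := M) (Eventually.of_forall fun a => hFnorm a)⟩
  obtain ⟨G, hGapprox, hGint⟩ := hFint.exists_boundedContinuous_integral_sub_le hδpos
  -- clipping
  set clipCM : C(ℝ, ℝ) := ⟨fun t => max (-M) (min M t),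
    continuous_const.max (continuous_const.min continuous_id)⟩ with hclipdef
  set G' : ℝ → C(↥K, ℝ) := fun a => clipCM.comp (G a) with hG'def
  have hG'cont : Continuous G' := (ContinuousMap.continuous_postcomp clipCM).comp G.continuous
  have hG'apply : ∀ a x, G' a x = max (-M) (min M (G a x)) := fun a x => rfl
  have hG'norm : ∀ a, ‖G' a‖ ≤ M := by
    intro a
    refine (ContinuousMap.norm_le _ hM0).2 fun x => ?_
    rw [Real.norm_eq_abs, hG'apply]
    exact aux_clip_bound hM0
  -- retraction onto K
  have hπmem : ∀ b : E, (S / max S ‖b‖) • b ∈ K := by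
    intro b
    rw [hKdef, Metric.mem_closedBall, dist_zero_right, norm_smul, Real.norm_eq_abs]
    have hmax : 0 < max S ‖b‖ := lt_of_lt_of_le hSpos (le_max_left _ _)
    rw [abs_of_nonneg (div_nonneg hSpos.le hmax.le), div_mul_eq_mul_div, div_le_iff₀ hmax]
    exact mul_le_mul_of_nonneg_left (le_max_right _ _) hSpos.le
  set π : E → ↥K := fun b => ⟨(S / max S ‖b‖) • b, hπmem b⟩ with hπdef
  have hπcont : Continuous π := by
    refine Continuous.subtype_mk ?_ _
    exact (continuous_const.div (continuous_const.max continuous_norm)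
      (fun b => (lt_of_lt_of_le hSpos (le_max_left _ _)).ne')).smul continuous_id
  have hπid : ∀ b : E, ‖b‖ ≤ S → ((π b : E) = b) := by
    intro b hb
    simp only [hπdef]
    rw [max_eq_left hb, div_self hSpos.ne', one_smul]
  -- the approximating function
  set g : ℝ × E → ℝ := fun p => G' p.1 (π p.2) with hgdef
  have hgcont : Continuous g :=
    continuous_eval.comp ((hG'cont.comp continuous_fst).prodMk (hπcont.comp continuous_snd))
  have hgbdd : ∀ p, |g p| ≤ M := by
    intro p
    rw [hgdef]
    simp only
    rw [hG'apply]
    exact aux_clip_bound hM0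
  set gB : (ℝ × E) →ᵇ ℝ := BoundedContinuousFunction.ofNormedAddCommGroup g hgcont M
    (fun p => by rw [Real.norm_eq_abs]; exact hgbdd p) with hgBdef
  have hgB : ∀ p, gB p = g p := fun p => rfl
  set θB : (ℝ × E) →ᵇ ℝ := BoundedContinuousFunction.ofNormedAddCommGroup
    (fun p => θ p.2) (hθcont.comp continuous_snd) 1
    (fun p => by rw [Real.norm_eq_abs, abs_of_nonneg (hθ01 p.2).1]; exact (hθ01 p.2).2)
    with hθBdef
  have hθB : ∀ p : ℝ × E, θB p = θ p.2 := fun p => rfl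
  -- the error function
  set φ : ℝ → ℝ := fun a => dist (F a) (G' a) with hφdef
  have hφmeas : Measurable φ := hFmeas.dist hG'cont.measurable
  have hφ0 : ∀ a, 0 ≤ φ a := fun a => dist_nonneg
  have hφbdd : ∀ a, φ a ≤ 2 * M := by
    intro a
    calc φ a ≤ ‖F a‖ + ‖G' a‖ := dist_le_norm_add_norm _ _
      _ ≤ 2 * M := by linarith [hFnorm a, hG'norm a]
  have hφle : ∀ a, φ a ≤ ‖F a - G a‖ := by
    intro a
    rw [hφdef]
    simp only
    rw [dist_eq_norm]
    refine (ContinuousMap.norm_le _ (norm_nonneg _)).2 fun x => ?_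
    rw [ContinuousMap.sub_apply, Real.norm_eq_abs, hG'apply]
    refine (aux_clip_dist (hfM (a, (x : E)))).trans ?_
    calc |F a x - G a x| = ‖(F a - G a) x‖ := by rw [ContinuousMap.sub_apply, Real.norm_eq_abs]
      _ ≤ ‖F a - G a‖ := ContinuousMap.norm_coe_le_norm _ x
  have hφint : Integrable φ μ :=
    ⟨hφmeas.aestronglyMeasurable, HasFiniteIntegral.of_bounded (C := 2 * M)
      (Eventually.of_forall fun a => by
        rw [Real.norm_eq_abs, abs_of_nonneg (hφ0 a)]; exact hφbdd a)⟩
  have hφμ : ∫ a, φ a ∂μ ≤ δ := by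
    calc ∫ a, φ a ∂μ ≤ ∫ a, ‖F a - G a‖ ∂μ :=
          integral_mono hφint (hFint.sub hGint).norm hφle
      _ ≤ δ := hGapprox
  -- pointwise bound
  have main_ptwise : ∀ (a : ℝ) (b : E), |f (a, b) - g (a, b)| ≤ φ a + 2 * M * θ b := by
    intro a b
    rcases le_or_gt ‖b‖ S with hb | hb
    · have hbK : b ∈ K := by rw [hKdef, Metric.mem_closedBall, dist_zero_right]; exact hb
      have hπb : π b = (⟨b, hbK⟩ : ↥K) := Subtype.ext (hπid b hb)
      have hgab : g (a, b) = G' a ⟨b, hbK⟩ := by rw [hgdef]; simp only; rw [hπb]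
      have hfab : f (a, b) = F a ⟨b, hbK⟩ := rfl
      have h1 : |f (a, b) - g (a, b)| ≤ φ a := by
        rw [hgab, hfab]
        calc |F a ⟨b, hbK⟩ - G' a ⟨b, hbK⟩| = dist (F a ⟨b, hbK⟩) (G' a ⟨b, hbK⟩) := by
              rw [Real.dist_eq]
          _ ≤ dist (F a) (G' a) := ContinuousMap.dist_apply_le_dist _
      have h2 : 0 ≤ 2 * M * θ b := by
        have := (hθ01 b).1; positivity
      linarith
    · have hθb : θ b = 1 := hθ1 b hb
      have h1 : |f (a, b) - g (a, b)| ≤ M + M := by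
        rw [sub_eq_add_neg]
        refine (abs_add_le _ _).trans ?_
        rw [abs_neg]
        exact add_le_add (hfM _) (hgbdd _)
      have := hφ0 a
      rw [hθb]
      linarith
  -- the key estimate
  have key : ∀ (X : Ω → ℝ) (Y : Ω → E), Measurable X → Measurable Y →
      Measure.map X ℙ = μ →
      |(∫ ω, f (X ω, Y ω)) - ∫ ω, g (X ω, Y ω)| ≤ δ + 2 * M * ∫ ω, θ (Y ω) := by
    intro X Y hX hY hXlaw
    have hfm : Measurable fun ω => f (X ω, Y ω) := hfmeas.comp (hX.prodMk hY)
    have hintf : Integrable (fun ω => f (X ω, Y ω)) ℙ :=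
      ⟨hfm.aestronglyMeasurable, HasFiniteIntegral.of_bounded (C := M)
        (Eventually.of_forall fun ω => by rw [Real.norm_eq_abs]; exact hfM _)⟩
    have hgm : Measurable fun ω => g (X ω, Y ω) :=
      hgcont.measurable.comp (hX.prodMk hY)
    have hintg : Integrable (fun ω => g (X ω, Y ω)) ℙ :=
      ⟨hgm.aestronglyMeasurable, HasFiniteIntegral.of_bounded (C := M)
        (Eventually.of_forall fun ω => by rw [Real.norm_eq_abs]; exact hgbdd _)⟩
    have hintφ : Integrable (fun ω => φ (X ω)) ℙ :=
      ⟨(hφmeas.comp hX).aestronglyMeasurable, HasFiniteIntegral.of_bounded (C := 2 * M)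
        (Eventually.of_forall fun ω => by
          rw [Real.norm_eq_abs, abs_of_nonneg (hφ0 _)]; exact hφbdd _)⟩
    have hintθ : Integrable (fun ω => θ (Y ω)) ℙ :=
      ⟨(hθcont.measurable.comp hY).aestronglyMeasurable,
        HasFiniteIntegral.of_bounded (C := 1)
        (Eventually.of_forall fun ω => by
          rw [Real.norm_eq_abs, abs_of_nonneg (hθ01 _).1]; exact (hθ01 _).2)⟩
    have hφpush : ∫ ω, φ (X ω) ∂ℙ = ∫ a, φ a ∂μ := by
      rw [← hXlaw, integral_map hX.aemeasurable hφmeas.aestronglyMeasurable]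
    rw [← integral_sub hintf hintg]
    calc |∫ ω, (f (X ω, Y ω) - g (X ω, Y ω))|
        ≤ ∫ ω, |f (X ω, Y ω) - g (X ω, Y ω)| := by
          simpa [Real.norm_eq_abs] using
            norm_integral_le_integral_norm (μ := (ℙ : Measure Ω))
              (fun ω => f (X ω, Y ω) - g (X ω, Y ω))
      _ ≤ ∫ ω, (φ (X ω) + 2 * M * θ (Y ω)) :=
          integral_mono (hintf.sub hintg).abs (hintφ.add (hintθ.const_mul _))
            fun ω => main_ptwise _ _
      _ = (∫ ω, φ (X ω)) + 2 * M * ∫ ω, θ (Y ω) := by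
          rw [integral_add hintφ (hintθ.const_mul _), integral_const_mul]
      _ ≤ δ + 2 * M * ∫ ω, θ (Y ω) := by
          rw [hφpush]; linarith [hφμ]
  -- convergence of the auxiliary integrals
  have hgconv := Metric.tendsto_nhds.1 (hconv gB) δ' hδ'pos
  have hθconv' : Tendsto (fun n => ∫ ω, θ (B n ω)) atTop (nhds (∫ ω, θ (B₀ ω))) := by
    have := hconv θB
    simpa only [hθB] using this
  have hθ0 : ∫ ω, θ (B₀ ω) < δ' := hm
  have hθn := Metric.tendsto_nhds.1 hθconv' δ' hδ'pos
  have e0 : |(∫ ω, f (A₀ ω, B₀ ω)) - ∫ ω, g (A₀ ω, B₀ ω)| ≤ δ + 2 * M * ∫ ω, θ (B₀ ω) :=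
    key A₀ B₀ hA₀meas hB₀meas rfl
  filter_upwards [hgconv, hθn] with n hn1 hn2
  rw [Real.dist_eq]
  have en : |(∫ ω, f (A n ω, B n ω)) - ∫ ω, g (A n ω, B n ω)| ≤
      δ + 2 * M * ∫ ω, θ (B n ω) :=
    key (A n) (B n) (hAmeas n) (hBmeas n) (hAlaw n)
  rw [Real.dist_eq] at hn1 hn2
  have hθnlt : ∫ ω, θ (B n ω) < 2 * δ' := by
    have := abs_sub_lt_iff.1 hn2
    linarith [this.1]
  have ht1 : 2 * M * ∫ ω, θ (B n ω) ≤ 2 * M * (2 * δ') :=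
    mul_le_mul_of_nonneg_left hθnlt.le (by positivity)
  have ht2 : 2 * M * ∫ ω, θ (B₀ ω) ≤ 2 * M * δ' :=
    mul_le_mul_of_nonneg_left hθ0.le (by positivity)
  have hgn : |(∫ ω, g (A n ω, B n ω)) - ∫ ω, g (A₀ ω, B₀ ω)| < δ' := by
    have : (fun ω => gB (A n ω, B n ω)) = fun ω => g (A n ω, B n ω) := rfl
    simpa only [hgB] using hn1
  have hδ'eq : (6 * M + 1) * δ' = ε / 4 := by
    rw [hδ'def]
    field_simp
  calc |(∫ ω, f (A n ω, B n ω)) - ∫ ω, f (A₀ ω, B₀ ω)|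
      ≤ |(∫ ω, f (A n ω, B n ω)) - ∫ ω, g (A n ω, B n ω)| +
        |(∫ ω, g (A n ω, B n ω)) - ∫ ω, f (A₀ ω, B₀ ω)| := abs_sub_le _ _ _
    _ ≤ |(∫ ω, f (A n ω, B n ω)) - ∫ ω, g (A n ω, B n ω)| +
        (|(∫ ω, g (A n ω, B n ω)) - ∫ ω, g (A₀ ω, B₀ ω)| +
          |(∫ ω, g (A₀ ω, B₀ ω)) - ∫ ω, f (A₀ ω, B₀ ω)|) := by
          gcongr
          exact abs_sub_le _ _ _
    _ < ε := by
        rw [abs_sub_comm (∫ ω, g (A₀ ω, B₀ ω))] at *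
        have h2δ : δ = ε / 4 := rfl
        linarith [en, e0, hgn, ht1, ht2, hδ'eq]
end

section
/- Let (Aₙ, Bₙ) converge in distribution to (A, B) in ℝ × ℝ^k with Aₙ equal in distribution to A for all n. Then for any function φ : ℝ × ℝ^k → ℝ^{k'} (possibly unbounded) that is continuous in all but the first coordinate, φ(Aₙ, Bₙ) converges in distribution to φ(A, B). -/
open MeasureTheory Filter BoundedContinuousFunction
open scoped ProbabilityTheory

lemma aux_transfer {Ω : Type*} [MeasureSpace Ω] {X Y : Ω → ℝ}
    (hX : Measurable X) (hY : Measurable Y)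
    (hmap : Measure.map X ℙ = Measure.map Y ℙ) {ξ : ℝ → ℝ} (hξ : Measurable ξ) :
    ∫ ω, ξ (X ω) ∂ℙ = ∫ ω, ξ (Y ω) ∂ℙ := by
  rw [← integral_map hX.aemeasurable hξ.aestronglyMeasurable, hmap,
    integral_map hY.aemeasurable hξ.aestronglyMeasurable]

lemma aux_intbd {Ω : Type*} [MeasureSpace Ω] [IsProbabilityMeasure (ℙ : Measure Ω)]
    {X : Ω → ℝ} (hX : Measurable X) (C : ℝ) (hC : ∀ ω, |X ω| ≤ C) :
    Integrable X ℙ :=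
  (integrable_const C).mono' hX.aestronglyMeasurable (Eventually.of_forall fun ω => by
    simpa using hC ω)

lemma aux_conv {k : ℕ} {Ω : Type*} [MeasureSpace Ω] [IsProbabilityMeasure (ℙ : Measure Ω)]
    (A : ℕ → Ω → ℝ) (B : ℕ → Ω → EuclideanSpace ℝ (Fin k))
    (A₀ : Ω → ℝ) (B₀ : Ω → EuclideanSpace ℝ (Fin k))
    (hAmeas : ∀ n, Measurable (A n)) (hBmeas : ∀ n, Measurable (B n))
    (hA₀meas : Measurable A₀) (hB₀meas : Measurable B₀)
    (hconv : ∀ g : (ℝ × EuclideanSpace ℝ (Fin k)) →ᵇ ℝ,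
      Tendsto (fun n => ∫ ω, g (A n ω, B n ω)) atTop (nhds (∫ ω, g (A₀ ω, B₀ ω))))
    (hAlaw : ∀ n, Measure.map (A n) ℙ = Measure.map A₀ ℙ)
    (f : ℝ → ℝ) (hf : Measurable f) (Cf : ℝ) (hCf : ∀ a, |f a| ≤ Cf)
    (ψ : EuclideanSpace ℝ (Fin k) →ᵇ ℝ) :
    Tendsto (fun n => ∫ ω, f (A n ω) * ψ (B n ω)) atTop
      (nhds (∫ ω, f (A₀ ω) * ψ (B₀ ω))) := by
  rw [Metric.tendsto_nhds]
  intro ε hε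
  haveI : IsProbabilityMeasure (Measure.map A₀ ℙ) :=
    Measure.isProbabilityMeasure_map hA₀meas.aemeasurable
  -- approximate f in L¹(ν) by a bounded continuous function
  have hfint : Integrable f (Measure.map A₀ ℙ) :=
    (integrable_const Cf).mono' hf.aestronglyMeasurable (Eventually.of_forall fun a => by
      simpa using hCf a)
  have hη : (0:ℝ) < ε / (3 * (‖ψ‖ + 1)) := by positivity
  obtain ⟨f', hf', -⟩ := hfint.exists_boundedContinuous_integral_sub_le hη
  -- the product bounded continuous function on the product space
  let G : (ℝ × EuclideanSpace ℝ (Fin k)) →ᵇ ℝ :=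
    (f'.compContinuous ⟨Prod.fst, continuous_fst⟩) *
      (ψ.compContinuous ⟨Prod.snd, continuous_snd⟩)
  have hG : ∀ p : ℝ × EuclideanSpace ℝ (Fin k), G p = f' p.1 * ψ p.2 := fun p => rfl
  -- the error term is controlled uniformly in n
  have key : ∀ (X : Ω → ℝ) (Y : Ω → EuclideanSpace ℝ (Fin k)), Measurable X → Measurable Y →
      Measure.map X ℙ = Measure.map A₀ ℙ →
      |∫ ω, f (X ω) * ψ (Y ω) ∂ℙ - ∫ ω, f' (X ω) * ψ (Y ω) ∂ℙ| ≤ ε / 3 := by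
    intro X Y hX hY hmap
    have hmeasfX : Measurable fun ω => f (X ω) * ψ (Y ω) :=
      ((hf.comp hX).mul (ψ.continuous.measurable.comp hY))
    have hmeasf'X : Measurable fun ω => f' (X ω) * ψ (Y ω) :=
      ((f'.continuous.measurable.comp hX).mul (ψ.continuous.measurable.comp hY))
    have hint1 : Integrable (fun ω => f (X ω) * ψ (Y ω)) ℙ :=
      aux_intbd hmeasfX (Cf * ‖ψ‖) (fun ω => by
        rw [abs_mul]
        exact mul_le_mul (hCf _) (ψ.norm_coe_le_norm _) (abs_nonneg _)
          ((abs_nonneg (f (X ω))).trans (hCf (X ω))))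
    have hint2 : Integrable (fun ω => f' (X ω) * ψ (Y ω)) ℙ :=
      aux_intbd hmeasf'X (‖f'‖ * ‖ψ‖) (fun ω => by
        rw [abs_mul]
        exact mul_le_mul (f'.norm_coe_le_norm _) (ψ.norm_coe_le_norm _) (abs_nonneg _)
          (norm_nonneg _))
    have hmeasd : Measurable fun a => ‖f a - f' a‖ * ‖ψ‖ :=
      ((hf.sub f'.continuous.measurable).norm).mul measurable_const
    have hintd : Integrable (fun ω => ‖f (X ω) - f' (X ω)‖ * ‖ψ‖) ℙ :=
      aux_intbd (hmeasd.comp hX) ((Cf + ‖f'‖) * ‖ψ‖) (fun ω => by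
        rw [abs_mul, abs_norm, abs_norm]
        refine mul_le_mul_of_nonneg_right ((norm_sub_le _ _).trans ?_) (norm_nonneg _)
        refine add_le_add ?_ (f'.norm_coe_le_norm _)
        rw [Real.norm_eq_abs]; exact hCf _)
    have pt : ∀ ω, ‖f (X ω) * ψ (Y ω) - f' (X ω) * ψ (Y ω)‖ ≤ ‖f (X ω) - f' (X ω)‖ * ‖ψ‖ := by
      intro ω
      rw [← sub_mul, norm_mul]
      exact mul_le_mul_of_nonneg_left (ψ.norm_coe_le_norm _) (norm_nonneg _)
    have step2 : ∫ ω, ‖f (X ω) - f' (X ω)‖ * ‖ψ‖ ∂ℙ ≤ ε / (3 * (‖ψ‖ + 1)) * ‖ψ‖ := by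
      have e : ∫ ω, ‖f (X ω) - f' (X ω)‖ * ‖ψ‖ ∂ℙ
          = ∫ a, ‖f a - f' a‖ * ‖ψ‖ ∂(Measure.map A₀ ℙ) := by
        rw [← hmap, integral_map hX.aemeasurable hmeasd.aestronglyMeasurable]
      rw [e, integral_mul_const]
      exact mul_le_mul_of_nonneg_right hf' (norm_nonneg _)
    rw [← integral_sub hint1 hint2, ← Real.norm_eq_abs]
    calc ‖∫ ω, (f (X ω) * ψ (Y ω) - f' (X ω) * ψ (Y ω)) ∂ℙ‖
        ≤ ∫ ω, ‖f (X ω) * ψ (Y ω) - f' (X ω) * ψ (Y ω)‖ ∂ℙ := norm_integral_le_integral_norm _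
      _ ≤ ∫ ω, ‖f (X ω) - f' (X ω)‖ * ‖ψ‖ ∂ℙ := integral_mono (hint1.sub hint2).norm hintd pt
      _ ≤ ε / (3 * (‖ψ‖ + 1)) * ‖ψ‖ := step2
      _ ≤ ε / 3 := by
          rw [div_mul_eq_mul_div, div_le_div_iff₀ (by positivity) (by norm_num : (0:ℝ) < 3)]
          nlinarith [norm_nonneg ψ, hε.le]
  have h3 := Metric.tendsto_nhds.1 (hconv G) (ε/3) (by linarith)
  filter_upwards [h3] with n hn
  have e1 := key (A n) (B n) (hAmeas n) (hBmeas n) (hAlaw n)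
  have e2 := key A₀ B₀ hA₀meas hB₀meas rfl
  have hn' : dist (∫ ω, f' (A n ω) * ψ (B n ω)) (∫ ω, f' (A₀ ω) * ψ (B₀ ω)) < ε/3 := by
    simpa only [hG] using hn
  calc dist (∫ ω, f (A n ω) * ψ (B n ω)) (∫ ω, f (A₀ ω) * ψ (B₀ ω))
      ≤ dist (∫ ω, f (A n ω) * ψ (B n ω)) (∫ ω, f' (A n ω) * ψ (B n ω)) +
        dist (∫ ω, f' (A n ω) * ψ (B n ω)) (∫ ω, f' (A₀ ω) * ψ (B₀ ω)) +
        dist (∫ ω, f' (A₀ ω) * ψ (B₀ ω)) (∫ ω, f (A₀ ω) * ψ (B₀ ω)) :=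
        dist_triangle4 _ _ _ _
    _ < ε/3 + ε/3 + ε/3 := by
        have d1 : dist (∫ ω, f (A n ω) * ψ (B n ω)) (∫ ω, f' (A n ω) * ψ (B n ω)) ≤ ε/3 := by
          rw [Real.dist_eq]; exact e1
        have d3 : dist (∫ ω, f' (A₀ ω) * ψ (B₀ ω)) (∫ ω, f (A₀ ω) * ψ (B₀ ω)) ≤ ε/3 := by
          rw [dist_comm, Real.dist_eq]; exact e2
        linarith
    _ = ε := by ring


/-- If `(Aₙ, Bₙ)` converges in distribution to `(A, B)` in `ℝ × ℝ^k` with `Aₙ` equal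
in distribution to `A` for all `n`, then for any measurable `φ : ℝ × ℝ^k → ℝ^{k'}`
(possibly unbounded) that is continuous in all but the first coordinate,
`φ(Aₙ, Bₙ)` converges in distribution to `φ(A, B)`. -/
theorem stmt_3 {k k' : ℕ} {Ω : Type*} [MeasureSpace Ω] [IsProbabilityMeasure (ℙ : Measure Ω)]
    (A : ℕ → Ω → ℝ) (B : ℕ → Ω → EuclideanSpace ℝ (Fin k))
    (A₀ : Ω → ℝ) (B₀ : Ω → EuclideanSpace ℝ (Fin k))
    (hAmeas : ∀ n, Measurable (A n)) (hBmeas : ∀ n, Measurable (B n))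
    (hA₀meas : Measurable A₀) (hB₀meas : Measurable B₀)
    (hconv : ∀ g : (ℝ × EuclideanSpace ℝ (Fin k)) →ᵇ ℝ,
      Tendsto (fun n => ∫ ω, g (A n ω, B n ω)) atTop (nhds (∫ ω, g (A₀ ω, B₀ ω))))
    (hAlaw : ∀ n, Measure.map (A n) ℙ = Measure.map A₀ ℙ)
    (φ : ℝ × EuclideanSpace ℝ (Fin k) → EuclideanSpace ℝ (Fin k'))
    (hφmeas : Measurable φ)
    (hφcont : ∀ a, Continuous fun b => φ (a, b)) :
    ∀ g : EuclideanSpace ℝ (Fin k') →ᵇ ℝ,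
      Tendsto (fun n => ∫ ω, g (φ (A n ω, B n ω))) atTop
        (nhds (∫ ω, g (φ (A₀ ω, B₀ ω)))) := by
  intro g
  classical
  set C := ‖g‖ with hCdef
  have hC0 : 0 ≤ C := norm_nonneg g
  have hgb : ∀ x, |g x| ≤ C := fun x => by
    rw [← Real.norm_eq_abs]; exact g.norm_coe_le_norm x
  set h : ℝ × EuclideanSpace ℝ (Fin k) → ℝ := fun p => g (φ p) with hhdef
  have hmeash : Measurable h := g.continuous.measurable.comp hφmeas
  have hbh : ∀ p, |h p| ≤ C := fun p => hgb _
  have hconth : ∀ a, Continuous fun b => h (a, b) := fun a =>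
    g.continuous.comp (hφcont a)
  rw [Metric.tendsto_nhds]
  intro ε hε
  -- Step 1 : truncation radius
  set c : ℕ → EuclideanSpace ℝ (Fin k) → ℝ := fun m b => min 1 (max 0 (‖b‖ - m)) with hcdef
  have hc_cont : ∀ m, Continuous (c m) := fun m =>
    continuous_const.min (continuous_const.max (continuous_norm.sub continuous_const))
  have hc0 : ∀ m b, 0 ≤ c m b := fun m b => le_min zero_le_one (le_max_left _ _)
  have hc1 : ∀ m b, c m b ≤ 1 := fun m b => min_le_left _ _
  have hc_one : ∀ (m : ℕ) b, (m : ℝ) + 1 ≤ ‖b‖ → c m b = 1 := by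
    intro m b hb
    have : (1:ℝ) ≤ max 0 (‖b‖ - m) := le_max_of_le_right (by linarith)
    simp only [hcdef]; exact min_eq_left this
  have hc_anti : ∀ (m : ℕ) b, c (m + 1) b ≤ c m b := by
    intro m b
    apply min_le_min le_rfl
    apply max_le_max le_rfl
    push_cast; linarith
  have hintc : ∀ (m : ℕ) (Y : Ω → EuclideanSpace ℝ (Fin k)), Measurable Y →
      Integrable (fun ω => c m (Y ω)) ℙ := fun m Y hY =>
    aux_intbd ((hc_cont m).measurable.comp hY) 1 (fun ω =>
      abs_le.2 ⟨by linarith [hc0 m (Y ω)], hc1 m (Y ω)⟩)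
  have hlim0 : Tendsto (fun m : ℕ => ∫ ω, c m (B₀ ω) ∂ℙ) atTop (nhds 0) := by
    have h0 : (0:ℝ) = ∫ ω, (0:ℝ) ∂(ℙ : Measure Ω) := by simp
    rw [h0]
    apply tendsto_integral_of_dominated_convergence (fun _ => (1:ℝ))
      (fun m => ((hc_cont m).measurable.comp hB₀meas).aestronglyMeasurable)
      (integrable_const 1)
    · intro m
      filter_upwards with ω
      simp only [Function.comp_apply]
      rw [Real.norm_eq_abs]
      exact abs_le.2 ⟨by linarith [hc0 m (B₀ ω)], hc1 m (B₀ ω)⟩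
    · filter_upwards with ω
      obtain ⟨M, hM⟩ := exists_nat_ge ‖B₀ ω‖
      apply tendsto_nhds_of_eventually_eq
      filter_upwards [eventually_ge_atTop M] with m hm
      have : max 0 (‖B₀ ω‖ - (m:ℝ)) = 0 := max_eq_left (by
        have : (M:ℝ) ≤ m := Nat.cast_le.2 hm
        linarith)
      simp only [Function.comp_apply, hcdef, this]
      exact min_eq_right zero_le_one
  obtain ⟨m, hm⟩ : ∃ m : ℕ, ∫ ω, c m (B₀ ω) ∂ℙ < ε / (16 * (C + 1)) :=
    (hlim0.eventually_lt_const (by positivity)).exists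
  set R : ℝ := (m : ℝ) + 2 with hRdef
  have hR0 : 0 < R := by positivity
  set π : EuclideanSpace ℝ (Fin k) → EuclideanSpace ℝ (Fin k) :=
    fun b => (R / max R ‖b‖) • b with hπdef
  have hmaxpos : ∀ b : EuclideanSpace ℝ (Fin k), 0 < max R ‖b‖ := fun b =>
    lt_max_of_lt_left hR0
  have hπcont : Continuous π := by
    show Continuous (fun b => (R / max R ‖b‖) • b)
    refine Continuous.smul (f := fun b : EuclideanSpace ℝ (Fin k) => R / max R ‖b‖) ?_ continuous_id
    exact continuous_const.div (continuous_const.max continuous_norm)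
      (fun b => (hmaxpos b).ne')
  have hπnorm : ∀ b, ‖π b‖ ≤ R := by
    intro b
    rw [hπdef]
    simp only [norm_smul, Real.norm_eq_abs]
    rw [abs_of_nonneg (div_nonneg hR0.le (hmaxpos b).le)]
    rw [div_mul_eq_mul_div, div_le_iff₀ (hmaxpos b)]
    exact mul_le_mul_of_nonneg_left (le_max_right _ _) hR0.le
  have hπid : ∀ b, ‖b‖ ≤ R → π b = b := by
    intro b hb
    rw [hπdef]
    simp only [max_eq_left hb, div_self hR0.ne', one_smul]
  set h₁ : ℝ × EuclideanSpace ℝ (Fin k) → ℝ := fun p => h (p.1, π p.2) with hh₁def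
  have hbound1 : ∀ p : ℝ × EuclideanSpace ℝ (Fin k),
      |h p - h₁ p| ≤ 2 * C * c (m + 1) p.2 := by
    rintro ⟨a, b⟩
    by_cases hb : ‖b‖ ≤ R
    · have : h₁ (a, b) = h (a, b) := by rw [hh₁def]; simp only [hπid b hb]
      rw [this, sub_self, abs_zero]
      positivity
    · have h1 : c (m + 1) b = 1 := hc_one (m + 1) b (by
        push_cast
        rw [hRdef] at hb
        linarith [not_le.1 hb])
      rw [h1, mul_one]
      calc |h (a, b) - h₁ (a, b)| ≤ |h (a, b)| + |h₁ (a, b)| := abs_sub _ _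
        _ ≤ C + C := add_le_add (hbh _) (hbh _)
        _ = 2 * C := by ring
  -- Step 2 : modulus of continuity
  obtain ⟨u, hu⟩ : ∃ u : ℕ → EuclideanSpace ℝ (Fin k), DenseRange u :=
    ⟨TopologicalSpace.denseSeq _, TopologicalSpace.denseRange_denseSeq _⟩
  set δ : ℕ → ℝ := fun j => 1 / (j + 1) with hδdef
  have hδpos : ∀ j, 0 < δ j := fun j => by positivity
  set K : Set (EuclideanSpace ℝ (Fin k)) := Metric.closedBall 0 R with hKdef
  set K₂ : Set (EuclideanSpace ℝ (Fin k)) := Metric.closedBall 0 (R + 1) with hK₂def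
  set v : ℕ → ℝ → ℕ × ℕ → ℝ := fun j a p =>
    if u p.1 ∈ K₂ ∧ u p.2 ∈ K₂ ∧ dist (u p.1) (u p.2) ≤ 3 * δ j then
      |h (a, u p.1) - h (a, u p.2)| else 0 with hvdef
  have hv0 : ∀ j a p, 0 ≤ v j a p := by
    intro j a p
    rw [hvdef]
    dsimp only
    split_ifs
    · exact abs_nonneg _
    · exact le_rfl
  have hvle : ∀ j a p, v j a p ≤ 2 * C := by
    intro j a p
    rw [hvdef]
    dsimp only
    split_ifs
    · calc |h (a, u p.1) - h (a, u p.2)| ≤ |h (a, u p.1)| + |h (a, u p.2)| := abs_sub _ _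
        _ ≤ C + C := add_le_add (hbh _) (hbh _)
        _ = 2 * C := by ring
    · positivity
  set w : ℕ → ℝ → ℝ := fun j a => ⨆ p : ℕ × ℕ, v j a p with hwdef
  have hbdd : ∀ j a, BddAbove (Set.range (v j a)) := fun j a =>
    ⟨2 * C, by rintro x ⟨p, rfl⟩; exact hvle j a p⟩
  have hw_le : ∀ j a, w j a ≤ 2 * C := fun j a => ciSup_le (hvle j a)
  have hw0 : ∀ j a, 0 ≤ w j a := fun j a =>
    (hv0 j a (0, 0)).trans (le_ciSup (hbdd j a) (0, 0))
  have hwmeas : ∀ j, Measurable (w j) := by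
    intro j
    apply Measurable.iSup
    intro p
    rw [hvdef]
    dsimp only
    split_ifs
    · apply Measurable.abs
      exact (hmeash.comp (measurable_id.prodMk measurable_const)).sub
        (hmeash.comp (measurable_id.prodMk measurable_const))
    · exact measurable_const
  have claim1 : ∀ j a x y, x ∈ K → y ∈ K → dist x y ≤ 2 * δ j →
      |h (a, x) - h (a, y)| ≤ w j a := by
    intro j a x y hx hy hxy
    refine le_of_forall_pos_le_add ?_
    intro η hη
    obtain ⟨ρ₁, hρ₁pos, hρ₁⟩ := Metric.continuous_iff.1 (hconth a) x (η / 2) (by linarith)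
    obtain ⟨ρ₂, hρ₂pos, hρ₂⟩ := Metric.continuous_iff.1 (hconth a) y (η / 2) (by linarith)
    set ρ : ℝ := min (min ρ₁ ρ₂) (min 1 (δ j / 2)) with hρdef
    have hρpos : 0 < ρ := by
      apply lt_min (lt_min hρ₁pos hρ₂pos) (lt_min one_pos (by linarith [hδpos j]))
    obtain ⟨i₁, hi₁⟩ := Metric.denseRange_iff.1 hu x ρ hρpos
    obtain ⟨i₂, hi₂⟩ := Metric.denseRange_iff.1 hu y ρ hρpos
    have hρ1 : ρ ≤ 1 := (min_le_right _ _).trans (min_le_left _ _)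
    have hρδ : ρ ≤ δ j / 2 := (min_le_right _ _).trans (min_le_right _ _)
    have hρa : ρ ≤ ρ₁ := (min_le_left _ _).trans (min_le_left _ _)
    have hρb : ρ ≤ ρ₂ := (min_le_left _ _).trans (min_le_right _ _)
    have hxK : dist x (0 : EuclideanSpace ℝ (Fin k)) ≤ R := Metric.mem_closedBall.1 hx
    have hyK : dist y (0 : EuclideanSpace ℝ (Fin k)) ≤ R := Metric.mem_closedBall.1 hy
    have hm1 : u i₁ ∈ K₂ := by
      rw [hK₂def, Metric.mem_closedBall]
      calc dist (u i₁) (0 : EuclideanSpace ℝ (Fin k)) ≤ dist (u i₁) x + dist x 0 :=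
            dist_triangle _ _ _
        _ ≤ 1 + R := add_le_add (by rw [dist_comm]; linarith [hi₁]) hxK
        _ = R + 1 := by ring
    have hm2 : u i₂ ∈ K₂ := by
      rw [hK₂def, Metric.mem_closedBall]
      calc dist (u i₂) (0 : EuclideanSpace ℝ (Fin k)) ≤ dist (u i₂) y + dist y 0 :=
            dist_triangle _ _ _
        _ ≤ 1 + R := add_le_add (by rw [dist_comm]; linarith [hi₂]) hyK
        _ = R + 1 := by ring
    have hm3 : dist (u i₁) (u i₂) ≤ 3 * δ j := by
      calc dist (u i₁) (u i₂) ≤ dist (u i₁) x + dist x y + dist y (u i₂) :=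
            dist_triangle4 _ _ _ _
        _ ≤ ρ + 2 * δ j + ρ := by
            refine add_le_add (add_le_add ?_ hxy) ?_
            · rw [dist_comm]; linarith [hi₁]
            · linarith [hi₂]
        _ ≤ 3 * δ j := by linarith
    have hvterm : v j a (i₁, i₂) = |h (a, u i₁) - h (a, u i₂)| := by
      simp only [hvdef]
      exact if_pos ⟨hm1, hm2, hm3⟩
    have hle : |h (a, u i₁) - h (a, u i₂)| ≤ w j a := by
      rw [← hvterm]; exact le_ciSup (hbdd j a) (i₁, i₂)
    have d1 : |h (a, x) - h (a, u i₁)| ≤ η / 2 := by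
      rw [abs_sub_comm, ← Real.dist_eq]
      exact (hρ₁ (u i₁) (by rw [dist_comm]; linarith [hi₁])).le
    have d2 : |h (a, u i₂) - h (a, y)| ≤ η / 2 := by
      rw [← Real.dist_eq]
      exact (hρ₂ (u i₂) (by rw [dist_comm]; linarith [hi₂])).le
    linarith [abs_sub_le (h (a, x)) (h (a, u i₁)) (h (a, y)),
      abs_sub_le (h (a, u i₁)) (h (a, u i₂)) (h (a, y)), d1, d2, hle]
  have claim2 : ∀ a, Tendsto (fun j => w j a) atTop (nhds 0) := by
    intro a
    rw [Metric.tendsto_atTop]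
    intro ε' hε'
    have hK₂c : IsCompact K₂ := isCompact_closedBall _ _
    have huc := hK₂c.uniformContinuousOn_of_continuous (hconth a).continuousOn
    rw [Metric.uniformContinuousOn_iff] at huc
    obtain ⟨δ₀, hδ₀, huc⟩ := huc (ε' / 2) (by linarith)
    obtain ⟨N, hN⟩ := exists_nat_gt (3 / δ₀)
    refine ⟨N + 1, fun j hj => ?_⟩
    have h3δ : 3 * δ j < δ₀ := by
      rw [hδdef]
      dsimp only
      rw [mul_one_div, div_lt_iff₀ (by positivity)]
      have hNj : (N : ℝ) < (j : ℝ) + 1 := by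
        have : (N:ℝ) + 1 ≤ j := by exact_mod_cast hj
        linarith
      have h3N : 3 < δ₀ * N := by
        rw [div_lt_iff₀ hδ₀] at hN
        nlinarith [hN]
      calc (3:ℝ) < δ₀ * N := h3N
        _ ≤ δ₀ * ((j:ℝ) + 1) := by nlinarith [hδ₀, hNj]
    have hwle : w j a ≤ ε' / 2 := by
      apply ciSup_le
      intro p
      rw [hvdef]
      dsimp only
      split_ifs with hcond
      · rw [← Real.dist_eq]
        exact (huc _ hcond.1 _ hcond.2.1 (lt_of_le_of_lt hcond.2.2 h3δ)).le
      · positivity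
    rw [Real.dist_eq, sub_zero, abs_of_nonneg (hw0 j a)]
    linarith
  have claim3 : Tendsto (fun j => ∫ ω, w j (A₀ ω) ∂ℙ) atTop (nhds 0) := by
    have h0 : (0:ℝ) = ∫ ω, (0:ℝ) ∂(ℙ : Measure Ω) := by simp
    rw [h0]
    apply tendsto_integral_of_dominated_convergence (fun _ => 2 * C)
      (fun j => ((hwmeas j).comp hA₀meas).aestronglyMeasurable)
      (integrable_const _)
    · intro j
      filter_upwards with ω
      simp only [Function.comp_apply]
      rw [Real.norm_eq_abs, abs_of_nonneg (hw0 j (A₀ ω))]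
      exact hw_le j (A₀ ω)
    · filter_upwards with ω
      exact claim2 (A₀ ω)
  obtain ⟨j, hj⟩ : ∃ j, ∫ ω, w j (A₀ ω) ∂ℙ < ε / 8 :=
    (claim3.eventually_lt_const (by positivity)).exists
  -- Step 3 : partition of unity on K
  obtain ⟨t, htK, htfin, htcov⟩ :=
    (isCompact_closedBall (0 : EuclideanSpace ℝ (Fin k)) R).finite_cover_balls (hδpos j)
  set T : Finset (EuclideanSpace ℝ (Fin k)) := htfin.toFinset with hTdef
  have hTmem : ∀ x, x ∈ T ↔ x ∈ t := fun x => htfin.mem_toFinset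
  set θ : EuclideanSpace ℝ (Fin k) → EuclideanSpace ℝ (Fin k) → ℝ :=
    fun cc x => max 0 (δ j - dist x cc) with hθdef
  have hθcont : ∀ cc, Continuous (θ cc) := fun cc =>
    continuous_const.max (continuous_const.sub (continuous_id.dist continuous_const))
  have hθ0 : ∀ cc x, 0 ≤ θ cc x := fun cc x => le_max_left _ _
  set S : EuclideanSpace ℝ (Fin k) → ℝ := fun x => ∑ cc ∈ T, θ cc x with hSdef
  have hScont : Continuous S := continuous_finset_sum _ fun cc _ => hθcont cc
  have hSpos : ∀ x ∈ Metric.closedBall (0 : EuclideanSpace ℝ (Fin k)) R, 0 < S x := by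
    intro x hx
    obtain ⟨cc, hcc, hxc⟩ := Set.mem_iUnion₂.1 (htcov hx)
    refine Finset.sum_pos' (fun c' _ => hθ0 c' x) ⟨cc, (hTmem cc).2 hcc, ?_⟩
    have hd : dist x cc < δ j := Metric.mem_ball.1 hxc
    rw [hθdef]
    dsimp only
    rw [lt_max_iff]
    right; linarith
  have hπK : ∀ b, π b ∈ Metric.closedBall (0 : EuclideanSpace ℝ (Fin k)) R := fun b =>
    Metric.mem_closedBall.2 (by rw [dist_zero_right]; exact hπnorm b)
  set ψ : EuclideanSpace ℝ (Fin k) → EuclideanSpace ℝ (Fin k) → ℝ :=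
    fun cc b => θ cc (π b) / S (π b) with hψdef
  have hψcont : ∀ cc, Continuous (ψ cc) := fun cc =>
    ((hθcont cc).comp hπcont).div (hScont.comp hπcont)
      (fun b => (hSpos _ (hπK b)).ne')
  have hψ0 : ∀ cc b, 0 ≤ ψ cc b := fun cc b =>
    div_nonneg (hθ0 cc (π b)) (hSpos _ (hπK b)).le
  have hψle1 : ∀ cc ∈ T, ∀ b, ψ cc b ≤ 1 := by
    intro cc hcc b
    rw [hψdef]
    dsimp only
    rw [div_le_one (hSpos _ (hπK b))]
    exact Finset.single_le_sum (fun c' _ => hθ0 c' (π b)) hcc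
  have hψsum : ∀ b, ∑ cc ∈ T, ψ cc b = 1 := fun b => by
    rw [hψdef]
    dsimp only
    rw [← Finset.sum_div, div_self (hSpos _ (hπK b)).ne']
  have hψpos_dist : ∀ cc b, ψ cc b ≠ 0 → dist (π b) cc < δ j := by
    intro cc b hne
    by_contra hge
    apply hne
    rw [hψdef]
    dsimp only
    rw [hθdef]
    dsimp only
    rw [max_eq_left (by linarith [not_lt.1 hge]), zero_div]
  set h₂ : ℝ × EuclideanSpace ℝ (Fin k) → ℝ :=
    fun p => ∑ cc ∈ T, h (p.1, cc) * ψ cc p.2 with hh₂def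
  have hbound2 : ∀ p : ℝ × EuclideanSpace ℝ (Fin k), |h₁ p - h₂ p| ≤ w j p.1 := by
    rintro ⟨a, b⟩
    have e1 : h₁ (a, b) = ∑ cc ∈ T, h (a, π b) * ψ cc b := by
      rw [← Finset.mul_sum, hψsum b, mul_one]
    have e2 : h₂ (a, b) = ∑ cc ∈ T, h (a, cc) * ψ cc b := rfl
    rw [e1, e2, ← Finset.sum_sub_distrib]
    calc |∑ cc ∈ T, (h (a, π b) * ψ cc b - h (a, cc) * ψ cc b)|
        ≤ ∑ cc ∈ T, |h (a, π b) * ψ cc b - h (a, cc) * ψ cc b| :=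
          Finset.abs_sum_le_sum_abs _ _
      _ ≤ ∑ cc ∈ T, ψ cc b * w j a := by
          apply Finset.sum_le_sum
          intro cc hcc
          rw [← sub_mul, abs_mul, abs_of_nonneg (hψ0 cc b), mul_comm]
          by_cases hz : ψ cc b = 0
          · rw [hz]; simp
          · refine mul_le_mul_of_nonneg_left ?_ (hψ0 cc b)
            refine claim1 j a (π b) cc (hπK b) (htK ((hTmem cc).1 hcc)) ?_
            have := hψpos_dist cc b hz
            linarith [hδpos j]
      _ = w j a := by rw [← Finset.sum_mul, hψsum b, one_mul]
  -- Step 3b : convergence for h₂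
  have hint_h₂term : ∀ (cc : EuclideanSpace ℝ (Fin k)), cc ∈ T →
      ∀ (X : Ω → ℝ) (Y : Ω → EuclideanSpace ℝ (Fin k)), Measurable X → Measurable Y →
      Integrable (fun ω => h (X ω, cc) * ψ cc (Y ω)) ℙ := by
    intro cc hcc X Y hX hY
    apply aux_intbd (((hmeash.comp (hX.prodMk measurable_const))).mul
      ((hψcont cc).measurable.comp hY)) C
    intro ω
    show |h (X ω, cc) * ψ cc (Y ω)| ≤ C
    rw [abs_mul]
    calc |h (X ω, cc)| * |ψ cc (Y ω)| ≤ C * 1 := by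
          apply mul_le_mul (hbh _) ?_ (abs_nonneg _) hC0
          rw [abs_of_nonneg (hψ0 cc (Y ω))]
          exact hψle1 cc hcc (Y ω)
      _ = C := mul_one C
  have reweq : ∀ (X : Ω → ℝ) (Y : Ω → EuclideanSpace ℝ (Fin k)),
      Measurable X → Measurable Y →
      ∫ ω, h₂ (X ω, Y ω) ∂ℙ = ∑ cc ∈ T, ∫ ω, h (X ω, cc) * ψ cc (Y ω) ∂ℙ := by
    intro X Y hX hY
    rw [← integral_finset_sum T (fun cc hcc => hint_h₂term cc hcc X Y hX hY)]
  have tendsto₂ : Tendsto (fun n => ∫ ω, h₂ (A n ω, B n ω) ∂ℙ) atTop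
      (nhds (∫ ω, h₂ (A₀ ω, B₀ ω) ∂ℙ)) := by
    rw [reweq A₀ B₀ hA₀meas hB₀meas]
    apply Tendsto.congr (fun n => (reweq (A n) (B n) (hAmeas n) (hBmeas n)).symm)
    apply tendsto_finset_sum
    intro cc hcc
    set ψb : EuclideanSpace ℝ (Fin k) →ᵇ ℝ :=
      BoundedContinuousFunction.ofNormedAddCommGroup (ψ cc) (hψcont cc) 1 (fun b => by
        rw [Real.norm_eq_abs, abs_of_nonneg (hψ0 cc b)]
        exact hψle1 cc hcc b) with hψbdef
    have hψb : ∀ b, ψb b = ψ cc b := fun b => rfl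
    have := aux_conv A B A₀ B₀ hAmeas hBmeas hA₀meas hB₀meas hconv hAlaw
      (fun a => h (a, cc)) (hmeash.comp (measurable_id.prodMk measurable_const)) C
      (fun a => hbh _) ψb
    simpa only [hψb] using this
  -- Step 4 : assembly
  have hmeash₁ : Measurable h₁ := by
    rw [hh₁def]
    exact hmeash.comp (measurable_fst.prodMk (hπcont.measurable.comp measurable_snd))
  have hbh₁ : ∀ p, |h₁ p| ≤ C := fun p => hbh _
  have hmeash₂ : Measurable h₂ := by
    rw [hh₂def]
    exact Finset.measurable_sum T (fun cc _ =>
      (hmeash.comp (measurable_fst.prodMk measurable_const)).mul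
        ((hψcont cc).measurable.comp measurable_snd))
  have hbh₂ : ∀ p, |h₂ p| ≤ C := by
    intro p
    rw [hh₂def]
    dsimp only
    calc |∑ cc ∈ T, h (p.1, cc) * ψ cc p.2| ≤ ∑ cc ∈ T, |h (p.1, cc) * ψ cc p.2| :=
          Finset.abs_sum_le_sum_abs _ _
      _ ≤ ∑ cc ∈ T, C * ψ cc p.2 := by
          apply Finset.sum_le_sum
          intro cc hcc
          rw [abs_mul, abs_of_nonneg (hψ0 cc p.2)]
          exact mul_le_mul_of_nonneg_right (hbh _) (hψ0 cc p.2)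
      _ = C := by rw [← Finset.mul_sum, hψsum p.2, mul_one]
  have key15 : ∀ (X : Ω → ℝ) (Y : Ω → EuclideanSpace ℝ (Fin k)),
      Measurable X → Measurable Y →
      (∫ ω, c (m + 1) (Y ω) ∂ℙ ≤ ε / (16 * (C + 1))) →
      |∫ ω, h (X ω, Y ω) ∂ℙ - ∫ ω, h₁ (X ω, Y ω) ∂ℙ| ≤ ε / 8 := by
    intro X Y hX hY hI
    have i1 : Integrable (fun ω => h (X ω, Y ω)) ℙ :=
      aux_intbd (hmeash.comp (hX.prodMk hY)) C (fun ω => hbh _)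
    have i2 : Integrable (fun ω => h₁ (X ω, Y ω)) ℙ :=
      aux_intbd (hmeash₁.comp (hX.prodMk hY)) C (fun ω => hbh₁ _)
    have i3 : Integrable (fun ω => 2 * C * c (m + 1) (Y ω)) ℙ :=
      (hintc (m + 1) Y hY).const_mul _
    rw [← integral_sub i1 i2, ← Real.norm_eq_abs]
    calc ‖∫ ω, (h (X ω, Y ω) - h₁ (X ω, Y ω)) ∂ℙ‖
        ≤ ∫ ω, ‖h (X ω, Y ω) - h₁ (X ω, Y ω)‖ ∂ℙ := norm_integral_le_integral_norm _
      _ ≤ ∫ ω, 2 * C * c (m + 1) (Y ω) ∂ℙ := by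
          apply integral_mono (i1.sub i2).norm i3
          intro ω
          simp only [Pi.sub_apply]
          rw [Real.norm_eq_abs]
          exact hbound1 (X ω, Y ω)
      _ = 2 * C * ∫ ω, c (m + 1) (Y ω) ∂ℙ := by
          rw [integral_const_mul]
      _ ≤ 2 * C * (ε / (16 * (C + 1))) := mul_le_mul_of_nonneg_left hI (by positivity)
      _ ≤ ε / 8 := by
          rw [mul_div_assoc', div_le_div_iff₀ (by positivity) (by norm_num : (0:ℝ) < 8)]
          nlinarith [hε.le, hC0]
  have key24 : ∀ (X : Ω → ℝ) (Y : Ω → EuclideanSpace ℝ (Fin k)),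
      Measurable X → Measurable Y → Measure.map X ℙ = Measure.map A₀ ℙ →
      |∫ ω, h₁ (X ω, Y ω) ∂ℙ - ∫ ω, h₂ (X ω, Y ω) ∂ℙ| ≤ ε / 8 := by
    intro X Y hX hY hmap
    have i2 : Integrable (fun ω => h₁ (X ω, Y ω)) ℙ :=
      aux_intbd (hmeash₁.comp (hX.prodMk hY)) C (fun ω => hbh₁ _)
    have i4 : Integrable (fun ω => h₂ (X ω, Y ω)) ℙ :=
      aux_intbd (hmeash₂.comp (hX.prodMk hY)) C (fun ω => hbh₂ _)
    have i5 : Integrable (fun ω => w j (X ω)) ℙ :=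
      aux_intbd ((hwmeas j).comp hX) (2 * C) (fun ω =>
        abs_le.2 ⟨by linarith [hw0 j (X ω), hC0], hw_le j (X ω)⟩)
    rw [← integral_sub i2 i4, ← Real.norm_eq_abs]
    calc ‖∫ ω, (h₁ (X ω, Y ω) - h₂ (X ω, Y ω)) ∂ℙ‖
        ≤ ∫ ω, ‖h₁ (X ω, Y ω) - h₂ (X ω, Y ω)‖ ∂ℙ := norm_integral_le_integral_norm _
      _ ≤ ∫ ω, w j (X ω) ∂ℙ := by
          apply integral_mono (i2.sub i4).norm i5
          intro ω
          simp only [Pi.sub_apply]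
          rw [Real.norm_eq_abs]
          exact hbound2 (X ω, Y ω)
      _ = ∫ ω, w j (A₀ ω) ∂ℙ := aux_transfer hX hA₀meas hmap (hwmeas j)
      _ ≤ ε / 8 := hj.le
  have hGm : Tendsto (fun n => ∫ ω, c (m + 1) (B n ω) ∂ℙ) atTop
      (nhds (∫ ω, c (m + 1) (B₀ ω) ∂ℙ)) := by
    set Gm : (ℝ × EuclideanSpace ℝ (Fin k)) →ᵇ ℝ :=
      BoundedContinuousFunction.ofNormedAddCommGroup (fun p => c (m + 1) p.2)
        ((hc_cont (m + 1)).comp continuous_snd) 1 (fun p => by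
          rw [Real.norm_eq_abs]
          exact abs_le.2 ⟨by linarith [hc0 (m + 1) p.2], hc1 (m + 1) p.2⟩) with hGmdef
    have hGmeq : ∀ p : ℝ × EuclideanSpace ℝ (Fin k), Gm p = c (m + 1) p.2 := fun p => rfl
    simpa only [hGmeq] using hconv Gm
  have hlt : ∫ ω, c (m + 1) (B₀ ω) ∂ℙ < ε / (16 * (C + 1)) :=
    lt_of_le_of_lt (integral_mono (hintc (m + 1) B₀ hB₀meas) (hintc m B₀ hB₀meas)
      (fun ω => hc_anti m (B₀ ω))) hm
  have ev1 : ∀ᶠ n in atTop, ∫ ω, c (m + 1) (B n ω) ∂ℙ ≤ ε / (16 * (C + 1)) :=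
    (hGm.eventually_lt_const hlt).mono (fun n hn => hn.le)
  have ev2 : ∀ᶠ n in atTop, dist (∫ ω, h₂ (A n ω, B n ω) ∂ℙ)
      (∫ ω, h₂ (A₀ ω, B₀ ω) ∂ℙ) < ε / 8 :=
    Metric.tendsto_nhds.1 tendsto₂ _ (by positivity)
  filter_upwards [ev1, ev2] with n h1n h2n
  have k1 := key15 (A n) (B n) (hAmeas n) (hBmeas n) h1n
  have k5 := key15 A₀ B₀ hA₀meas hB₀meas hlt.le
  have k2 := key24 (A n) (B n) (hAmeas n) (hBmeas n) (hAlaw n)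
  have k4 := key24 A₀ B₀ hA₀meas hB₀meas rfl
  have d1 : dist (∫ ω, h (A n ω, B n ω) ∂ℙ) (∫ ω, h₂ (A n ω, B n ω) ∂ℙ) ≤ ε / 8 + ε / 8 := by
    refine (dist_triangle _ (∫ ω, h₁ (A n ω, B n ω) ∂ℙ) _).trans ?_
    rw [Real.dist_eq, Real.dist_eq]
    exact add_le_add k1 k2
  have d3 : dist (∫ ω, h₂ (A₀ ω, B₀ ω) ∂ℙ) (∫ ω, h (A₀ ω, B₀ ω) ∂ℙ) ≤ ε / 8 + ε / 8 := by
    refine (dist_triangle _ (∫ ω, h₁ (A₀ ω, B₀ ω) ∂ℙ) _).trans ?_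
    rw [Real.dist_eq, Real.dist_eq,
      abs_sub_comm (∫ ω, h₂ (A₀ ω, B₀ ω) ∂ℙ) (∫ ω, h₁ (A₀ ω, B₀ ω) ∂ℙ),
      abs_sub_comm (∫ ω, h₁ (A₀ ω, B₀ ω) ∂ℙ) (∫ ω, h (A₀ ω, B₀ ω) ∂ℙ)]
    exact add_le_add k4 k5
  calc dist (∫ ω, g (φ (A n ω, B n ω)) ∂ℙ) (∫ ω, g (φ (A₀ ω, B₀ ω)) ∂ℙ)
      = dist (∫ ω, h (A n ω, B n ω) ∂ℙ) (∫ ω, h (A₀ ω, B₀ ω) ∂ℙ) := rfl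
    _ ≤ dist (∫ ω, h (A n ω, B n ω) ∂ℙ) (∫ ω, h₂ (A n ω, B n ω) ∂ℙ) +
        dist (∫ ω, h₂ (A n ω, B n ω) ∂ℙ) (∫ ω, h₂ (A₀ ω, B₀ ω) ∂ℙ) +
        dist (∫ ω, h₂ (A₀ ω, B₀ ω) ∂ℙ) (∫ ω, h (A₀ ω, B₀ ω) ∂ℙ) := dist_triangle4 _ _ _ _
    _ < ε := by linarith [h2n, d1, d3]
end

section
/- For a bounded positive family of densities p(·|x), the Gaussian-smoothed density x ↦ E_{G₁}[p(y | x + σG₀ + τ̃G₁, u)] with τ̃ > 0 is differentiable in x, with derivative (1/τ̃²) ∫ p(y | σG₀ + s, u) ((s - x)/(√(2π) τ̃)) e^{-(s-x)²/(2τ̃²)} ds, and d/dx log E_{G₁} p(y | x + σG₀ + τ̃G₁, u) = (1/τ̃) E[G₁ | Y = y, G₀, U = u]. -/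
open MeasureTheory ProbabilityTheory
open scoped ProbabilityTheory NNReal ENNReal

lemma aux_gauss_shift (f : ℝ → ℝ) (hf : Measurable f) (x τ : ℝ) (hτ : 0 < τ) :
    ∫ g, f (x + τ * g) ∂(gaussianReal 0 1)
      = ∫ s, f s * gaussianPDFReal x ⟨τ ^ 2, sq_nonneg τ⟩ s := by
  set V : ℝ≥0 := ⟨τ ^ 2, sq_nonneg τ⟩ with hV
  have hVne : V ≠ 0 := by
    rw [← NNReal.coe_ne_zero]
    exact (by positivity : (τ:ℝ) ^ 2 ≠ 0)
  have hmap : (gaussianReal 0 1).map (fun g => x + τ * g) = gaussianReal x V := by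
    have h1 : (fun g : ℝ => x + τ * g) = (fun t => x + t) ∘ (fun g => τ * g) := rfl
    rw [h1, ← Measure.map_map (by fun_prop) (by fun_prop),
      gaussianReal_map_const_mul, gaussianReal_map_const_add]
    congr 1
    · ring
    · ext
      simp [hV]
      rfl
  have h2 : ∫ g, f (x + τ * g) ∂(gaussianReal 0 1)
      = ∫ t, f t ∂((gaussianReal 0 1).map (fun g => x + τ * g)) :=
    (integral_map (by fun_prop) hf.aestronglyMeasurable).symm
  rw [h2, hmap, gaussianReal_of_var_ne_zero _ hVne]
  have h3 : gaussianPDF x V = fun s => ((fun s => (gaussianPDFReal x V s).toNNReal) s : ℝ≥0∞) :=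
    rfl
  rw [h3, integral_withDensity_eq_integral_smul
    ((measurable_gaussianPDFReal x V).real_toNNReal) f]
  refine integral_congr_ae (ae_of_all _ fun s => ?_)
  simp [NNReal.smul_def, Real.coe_toNNReal _ (gaussianPDFReal_nonneg x V s), mul_comm]

lemma aux_pdf_deriv (τ : ℝ) (hτ : 0 < τ) (s m : ℝ) :
    HasDerivAt (fun m' => gaussianPDFReal m' ⟨τ ^ 2, sq_nonneg τ⟩ s)
      (gaussianPDFReal m ⟨τ ^ 2, sq_nonneg τ⟩ s * ((s - m) / τ ^ 2)) m := by
  have hτ2 : (τ:ℝ) ^ 2 ≠ 0 := by positivity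
  have h0 : HasDerivAt (fun m' : ℝ => -(s - m') ^ 2 / (2 * τ ^ 2)) ((s - m) / τ ^ 2) m := by
    have h1 : HasDerivAt (fun m' : ℝ => s - m') (-1) m := (hasDerivAt_id m).const_sub s
    have h2 := ((h1.pow 2).neg).div_const (2 * τ ^ 2)
    refine h2.congr_deriv ?_
    field_simp
    ring
  have h3 := (h0.exp).const_mul ((Real.sqrt (2 * Real.pi * τ ^ 2))⁻¹)
  simp only [gaussianPDFReal, NNReal.coe_mk]
  refine h3.congr_deriv ?_
  exact (mul_assoc _ _ _).symm

lemma aux_est (τ x s x' : ℝ) (hτ : 0 < τ) (h : |x' - x| ≤ 1) :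
    |s - x'| * Real.exp (-(s - x') ^ 2 / (2 * τ ^ 2))
      ≤ 2 * τ * Real.exp (1 / (4 * τ ^ 2)) * Real.exp (-(s - x) ^ 2 / (8 * τ ^ 2)) := by
  set t := s - x' with ht
  have habs : |t| ≤ 2 * τ * Real.exp (t ^ 2 / (4 * τ ^ 2)) := by
    have he : t ^ 2 / (4 * τ ^ 2) + 1 ≤ Real.exp (t ^ 2 / (4 * τ ^ 2)) :=
      Real.add_one_le_exp _
    have hA : 2 * τ * (t ^ 2 / (4 * τ ^ 2) + 1) = (t ^ 2 + 4 * τ ^ 2) / (2 * τ) := by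
      field_simp
      ring
    have hB : |t| ≤ (t ^ 2 + 4 * τ ^ 2) / (2 * τ) := by
      rw [le_div_iff₀ (by positivity)]
      nlinarith [sq_nonneg (|t| - 2 * τ), sq_abs t]
    calc |t| ≤ (t ^ 2 + 4 * τ ^ 2) / (2 * τ) := hB
      _ = 2 * τ * (t ^ 2 / (4 * τ ^ 2) + 1) := hA.symm
      _ ≤ 2 * τ * Real.exp (t ^ 2 / (4 * τ ^ 2)) :=
          mul_le_mul_of_nonneg_left he (by positivity)
  have h1 : |t| * Real.exp (-t ^ 2 / (2 * τ ^ 2))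
      ≤ 2 * τ * Real.exp (-t ^ 2 / (4 * τ ^ 2)) := by
    have := mul_le_mul_of_nonneg_right habs (Real.exp_pos (-t ^ 2 / (2 * τ ^ 2))).le
    calc |t| * Real.exp (-t ^ 2 / (2 * τ ^ 2))
        ≤ 2 * τ * Real.exp (t ^ 2 / (4 * τ ^ 2)) * Real.exp (-t ^ 2 / (2 * τ ^ 2)) := this
      _ = 2 * τ * Real.exp (-t ^ 2 / (4 * τ ^ 2)) := by
          rw [mul_assoc, ← Real.exp_add]
          congr 1
          field_simp
          ring
  have h2 : Real.exp (-t ^ 2 / (4 * τ ^ 2))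
      ≤ Real.exp (1 / (4 * τ ^ 2)) * Real.exp (-(s - x) ^ 2 / (8 * τ ^ 2)) := by
    rw [← Real.exp_add]
    apply Real.exp_le_exp.mpr
    have hxx : (x' - x) ^ 2 ≤ 1 := by
      have := abs_le.mp h
      nlinarith
    have h6 : (s - x) ^ 2 ≤ 2 * t ^ 2 + 2 := by
      have hsx : s - x = t + (x' - x) := by rw [ht]; ring
      rw [hsx]
      nlinarith [sq_nonneg (t - (x' - x))]
    have h8 : -t ^ 2 / (4 * τ ^ 2) = (-2 * t ^ 2) / (8 * τ ^ 2) := by ring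
    have h9 : 1 / (4 * τ ^ 2) + -(s - x) ^ 2 / (8 * τ ^ 2)
        = (2 - (s - x) ^ 2) / (8 * τ ^ 2) := by ring
    rw [h8, h9]
    gcongr
    linarith
  calc |t| * Real.exp (-t ^ 2 / (2 * τ ^ 2))
      ≤ 2 * τ * Real.exp (-t ^ 2 / (4 * τ ^ 2)) := h1
    _ ≤ 2 * τ * (Real.exp (1 / (4 * τ ^ 2)) * Real.exp (-(s - x) ^ 2 / (8 * τ ^ 2))) := by
        have h2τ : (0:ℝ) ≤ 2 * τ := by positivity
        exact mul_le_mul_of_nonneg_left h2 h2τ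
    _ = 2 * τ * Real.exp (1 / (4 * τ ^ 2)) * Real.exp (-(s - x) ^ 2 / (8 * τ ^ 2)) := by ring

/-- For a bounded positive family of densities `p(·|x,u)` (w.r.t. a base measure) and
`τ̃ > 0`, the Gaussian-smoothed density `x ↦ E_{G₁}[p(y | x + σG₀ + τ̃G₁, u)]` is
differentiable in `x`, with derivative
`(1/τ̃²) ∫ p(y | σG₀ + s, u) ((s - x)/(√(2π) τ̃)) e^{-(s-x)²/(2τ̃²)} ds`, and its
logarithmic derivative equals `(1/τ̃)·E[G₁ | Y = y, G₀ = g₀, U = u]`, the latter being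
the posterior-mean ratio `∫ g·p(y|x+σg₀+τ̃g,u) dγ(g) / ∫ p(y|x+σg₀+τ̃g,u) dγ(g)`. -/
theorem stmt_5 (p : ℝ → ℝ → ℝ → ℝ) (μY : Measure ℝ) [SigmaFinite μY]
    (hpmeas : Measurable fun yxu : ℝ × ℝ × ℝ => p yxu.1 yxu.2.1 yxu.2.2)
    (hppos : ∀ y x u, 0 < p y x u)
    (hpbdd : ∃ Cp : ℝ, ∀ y x u, p y x u ≤ Cp)
    (hpdens : ∀ x u, ∫ y, p y x u ∂μY = 1)
    (σ tauT : ℝ) (hσ : 0 ≤ σ) (htau : 0 < tauT) :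
    ∀ (y g₀ u x : ℝ),
      HasDerivAt (fun x' => ∫ g, p y (x' + σ * g₀ + tauT * g) u ∂(gaussianReal 0 1))
        ((1 / tauT ^ 2) *
          ∫ s, p y (σ * g₀ + s) u * ((s - x) / (Real.sqrt (2 * Real.pi) * tauT)) *
            Real.exp (-(s - x) ^ 2 / (2 * tauT ^ 2))) x ∧
      deriv (fun x' => Real.log
          (∫ g, p y (x' + σ * g₀ + tauT * g) u ∂(gaussianReal 0 1))) x
        = (1 / tauT) *
            (∫ g, g * p y (x + σ * g₀ + tauT * g) u ∂(gaussianReal 0 1)) /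
              (∫ g, p y (x + σ * g₀ + tauT * g) u ∂(gaussianReal 0 1)) := by
  obtain ⟨Cp, hCp⟩ := hpbdd
  intro y g₀ u x
  set V : ℝ≥0 := ⟨tauT ^ 2, sq_nonneg tauT⟩ with hV
  have hVne : V ≠ 0 := by
    rw [← NNReal.coe_ne_zero]
    exact (by positivity : (tauT:ℝ) ^ 2 ≠ 0)
  have htau2 : (0:ℝ) < tauT ^ 2 := by positivity
  set q : ℝ → ℝ := fun s => p y (σ * g₀ + s) u with hqdef
  have hq : Measurable q := by
    have : q = (fun yxu : ℝ × ℝ × ℝ => p yxu.1 yxu.2.1 yxu.2.2)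
        ∘ (fun s => (y, σ * g₀ + s, u)) := rfl
    rw [this]
    exact hpmeas.comp (by fun_prop)
  have hqpos : ∀ s, 0 < q s := fun s => hppos _ _ _
  have hqle : ∀ s, q s ≤ Cp := fun s => hCp _ _ _
  have hCp0 : (0:ℝ) < Cp := lt_of_lt_of_le (hqpos 0) (hqle 0)
  have hpdf_eq : ∀ m s : ℝ, gaussianPDFReal m V s
      = (Real.sqrt (2 * Real.pi) * tauT)⁻¹ * Real.exp (-(s - m) ^ 2 / (2 * tauT ^ 2)) := by
    intro m s
    rw [gaussianPDFReal]
    have : (V : ℝ) = tauT ^ 2 := rfl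
    rw [this, Real.sqrt_mul (by positivity) (tauT ^ 2), Real.sqrt_sq htau.le]
  have hFeq : ∀ x' : ℝ, ∫ g, p y (x' + σ * g₀ + tauT * g) u ∂(gaussianReal 0 1)
      = ∫ s, q s * gaussianPDFReal x' V s := by
    intro x'
    rw [← aux_gauss_shift q hq x' tauT htau]
    refine integral_congr_ae (ae_of_all _ fun g => ?_)
    simp only [hqdef]
    ring_nf
  have hFint : Integrable (fun s => q s * gaussianPDFReal x V s) := by
    refine Integrable.mono' ((integrable_gaussianPDFReal x V).const_mul Cp)
      ((hq.mul (measurable_gaussianPDFReal x V)).aestronglyMeasurable)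
      (ae_of_all _ fun s => ?_)
    rw [Real.norm_eq_abs, abs_mul, abs_of_pos (hqpos s),
      abs_of_nonneg (gaussianPDFReal_nonneg x V s)]
    exact mul_le_mul_of_nonneg_right (hqle s) (gaussianPDFReal_nonneg x V s)
  have hbdd_int : Integrable (fun s : ℝ =>
      (Real.sqrt (2 * Real.pi) * tauT)⁻¹ / tauT ^ 2 *
        (Cp * (2 * tauT * Real.exp (1 / (4 * tauT ^ 2)) *
          Real.exp (-(s - x) ^ 2 / (8 * tauT ^ 2))))) := by
    have hbase : Integrable (fun s : ℝ => Real.exp (-(8 * tauT ^ 2)⁻¹ * s ^ 2)) :=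
      integrable_exp_neg_mul_sq (by positivity)
    have hshift := hbase.comp_sub_right x
    have heq : (fun s : ℝ => Real.exp (-(8 * tauT ^ 2)⁻¹ * (s - x) ^ 2))
        = fun s : ℝ => Real.exp (-(s - x) ^ 2 / (8 * tauT ^ 2)) := by
      funext s
      congr 1
      field_simp
    rw [heq] at hshift
    exact ((hshift.const_mul _).const_mul _).const_mul _
  have key := hasDerivAt_integral_of_dominated_loc_of_deriv_le (μ := volume) (x₀ := x)
      (F := fun m s => q s * gaussianPDFReal m V s)
      (F' := fun m s => q s * (gaussianPDFReal m V s * ((s - m) / tauT ^ 2)))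
      (bound := fun s : ℝ =>
        (Real.sqrt (2 * Real.pi) * tauT)⁻¹ / tauT ^ 2 *
          (Cp * (2 * tauT * Real.exp (1 / (4 * tauT ^ 2)) *
            Real.exp (-(s - x) ^ 2 / (8 * tauT ^ 2)))))
      (Metric.ball_mem_nhds x one_pos)
      (Filter.Eventually.of_forall fun x' =>
        (hq.mul (measurable_gaussianPDFReal x' V)).aestronglyMeasurable)
      hFint
      ((hq.mul ((measurable_gaussianPDFReal x V).mul (by fun_prop))).aestronglyMeasurable)
      ?_ hbdd_int ?_
  · have hD := key.2
    have hFpos : 0 < ∫ s, q s * gaussianPDFReal x V s := by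
      rw [integral_pos_iff_support_of_nonneg
        (fun s => mul_nonneg (hqpos s).le (gaussianPDFReal_nonneg x V s)) hFint]
      have hsupp : Function.support (fun s => q s * gaussianPDFReal x V s) = Set.univ :=
        Set.eq_univ_iff_forall.mpr fun s =>
          (mul_pos (hqpos s) (gaussianPDFReal_pos x V s hVne)).ne'
      rw [hsupp]
      simp [Real.volume_univ]
    have hval : (1 / tauT ^ 2) *
          (∫ s, p y (σ * g₀ + s) u * ((s - x) / (Real.sqrt (2 * Real.pi) * tauT)) *
            Real.exp (-(s - x) ^ 2 / (2 * tauT ^ 2)))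
        = ∫ s, q s * (gaussianPDFReal x V s * ((s - x) / tauT ^ 2)) := by
      rw [← integral_const_mul]
      refine integral_congr_ae (ae_of_all _ fun s => ?_)
      simp only [hpdf_eq, hqdef]
      ring
    constructor
    · have hfun : (fun x' => ∫ g, p y (x' + σ * g₀ + tauT * g) u ∂(gaussianReal 0 1))
          = fun x' => ∫ s, q s * gaussianPDFReal x' V s := funext hFeq
      rw [hfun, hval]
      exact hD
    · have hnum : ∫ g, g * p y (x + σ * g₀ + tauT * g) u ∂(gaussianReal 0 1)
          = ∫ s, ((s - x) / tauT) * q s * gaussianPDFReal x V s := by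
        have hmf : Measurable (fun t => ((t - x) / tauT) * q t) :=
          ((measurable_id.sub_const x).div_const tauT).mul hq
        rw [← aux_gauss_shift (fun t => ((t - x) / tauT) * q t) hmf x tauT htau]
        refine integral_congr_ae (ae_of_all _ fun g => ?_)
        have h1 : (x + tauT * g - x) / tauT = g := by field_simp; ring
        simp only [hqdef, h1]
        ring_nf
      have hlog := (hD.log hFpos.ne').deriv
      have hfun2 : (fun x' => Real.log
            (∫ g, p y (x' + σ * g₀ + tauT * g) u ∂(gaussianReal 0 1)))
          = fun x' => Real.log (∫ s, q s * gaussianPDFReal x' V s) := by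
        funext x'
        rw [hFeq]
      rw [hfun2, hlog, hFeq x, hnum]
      congr 1
      rw [← integral_const_mul]
      refine integral_congr_ae (ae_of_all _ fun s => ?_)
      field_simp
  · -- bound
    refine ae_of_all _ fun s => fun x' hx' => ?_
    have hx'1 : |x' - x| ≤ 1 := by
      rw [Metric.mem_ball, Real.dist_eq] at hx'
      exact hx'.le
    rw [Real.norm_eq_abs, abs_mul, abs_mul, abs_div, abs_of_pos (hqpos s),
      abs_of_nonneg (gaussianPDFReal_nonneg x' V s), abs_of_pos htau2]
    rw [hpdf_eq]
    have hest := aux_est tauT x s x' htau hx'1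
    calc q s * ((Real.sqrt (2 * Real.pi) * tauT)⁻¹ *
          Real.exp (-(s - x') ^ 2 / (2 * tauT ^ 2)) * (|s - x'| / tauT ^ 2))
        = (Real.sqrt (2 * Real.pi) * tauT)⁻¹ / tauT ^ 2 *
            (q s * (|s - x'| * Real.exp (-(s - x') ^ 2 / (2 * tauT ^ 2)))) := by ring
      _ ≤ (Real.sqrt (2 * Real.pi) * tauT)⁻¹ / tauT ^ 2 *
            (Cp * (2 * tauT * Real.exp (1 / (4 * tauT ^ 2)) *
              Real.exp (-(s - x) ^ 2 / (8 * tauT ^ 2)))) := by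
          have h0 : (0:ℝ) ≤ (Real.sqrt (2 * Real.pi) * tauT)⁻¹ / tauT ^ 2 := by positivity
          refine mul_le_mul_of_nonneg_left ?_ h0
          refine mul_le_mul (hqle s) hest (by positivity) hCp0.le
  · -- differentiability
    refine ae_of_all _ fun s => fun x' _ => ?_
    exact (aux_pdf_deriv tauT htau s x').const_mul (q s)
end

section
/- Let ℓ be a quadratically-bounded loss and let R(y, τ, v, K, M) be the posterior Bayes risk under Gaussian noise of variance τ² for the K-truncated prior. For fixed finite K, R is bounded uniformly by R̄(K) = max_{‖ϑ‖_∞ ≤ K} ℓ(ϑ, 0), and the function (y, τ) ↦ R(y, τ, v, K, M) is continuous on ℝ^k × ℝ_{>0}. In particular, y ↦ R(y, τ, v, K, M) is Lipschitz with constant 2K√k R̄(K)/τ². -/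
open MeasureTheory ProbabilityTheory
open scoped ProbabilityTheory ENNReal

private lemma exp_aux (t : ℝ) : Real.exp t - 1 ≤ t * Real.exp t := by
  have h := Real.add_one_le_exp (-t)
  have h2 : Real.exp (-t) * Real.exp t = 1 := by rw [← Real.exp_add]; simp
  nlinarith [Real.exp_pos t, mul_le_mul_of_nonneg_right h (Real.exp_pos t).le]

private lemma exp_aux2 (t : ℝ) (ht : 0 ≤ t) : Real.exp t - 1 - t ≤ t^2 * Real.exp t := by
  have h1 := exp_aux t
  have h2 := mul_le_mul_of_nonneg_left h1 ht
  nlinarith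

set_option maxHeartbeats 1000000 in
/-- Properties of the posterior Bayes risk for a quadratically-bounded loss and a
prior kernel supported in `[-K, K]^k` (finite `K`): `R(y, τ, v, K, M)` is bounded by
`R̄(K) = sup_{‖ϑ‖_∞ ≤ K} ℓ(ϑ, 0)`, the map `(y, τ) ↦ R(y, τ, v, K, M)` is continuous on
`ℝ^k × ℝ_{>0}`, and `y ↦ R(y, τ, v, K, M)` is Lipschitz with constant
`2K√k R̄(K)/τ²`. -/
theorem stmt_7 {k : ℕ}
    (ℓ : EuclideanSpace ℝ (Fin k) → EuclideanSpace ℝ (Fin k) → ℝ) (C : ℝ)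
    (hℓmeas : Measurable fun z : EuclideanSpace ℝ (Fin k) × EuclideanSpace ℝ (Fin k) =>
      ℓ z.1 z.2)
    (hℓnonneg : ∀ ϑ d, 0 ≤ ℓ ϑ d)
    (hℓPL : ∀ (ϑ d ϑ' d' : EuclideanSpace ℝ (Fin k)),
      |ℓ ϑ d - ℓ ϑ' d'| ≤ C * (1 + ‖(ϑ, d)‖ + ‖(ϑ', d')‖) * ‖(ϑ - ϑ', d - d')‖)
    (hℓgrowth : ∀ ϑ ϑ' d, |ℓ ϑ d - ℓ ϑ' d| ≤
      C * (1 + Real.sqrt (ℓ ϑ d) + Real.sqrt (ℓ ϑ' d)) * ‖ϑ - ϑ'‖)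
    (K : ℝ) (hK : 0 < K) (M : ℝ≥0∞) (hM : 0 < M)
    (κ : ProbabilityTheory.Kernel (EuclideanSpace ℝ (Fin k)) (EuclideanSpace ℝ (Fin k)))
    [ProbabilityTheory.IsMarkovKernel κ]
    (hκsupp : ∀ v, ∀ᵐ ϑ ∂(κ v), ∀ i, |ϑ i| ≤ K)
    (R : EuclideanSpace ℝ (Fin k) → ℝ → EuclideanSpace ℝ (Fin k) → ℝ)
    (hR : ∀ y τ v, R y τ v =
      ⨅ d : {d : EuclideanSpace ℝ (Fin k) // ∀ i, ENNReal.ofReal |d i| ≤ M},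
        (∫ ϑ, ℓ ϑ d.1 * Real.exp (-‖y - ϑ‖ ^ 2 / (2 * τ ^ 2)) ∂(κ v)) /
          (∫ ϑ, Real.exp (-‖y - ϑ‖ ^ 2 / (2 * τ ^ 2)) ∂(κ v)))
    (Rbar : ℝ)
    (hRbar : Rbar = sSup {r : ℝ | ∃ ϑ : EuclideanSpace ℝ (Fin k),
      (∀ i, |ϑ i| ≤ K) ∧ r = ℓ ϑ 0}) :
    (∀ y τ v, 0 < τ → R y τ v ≤ Rbar) ∧
    (∀ v, ContinuousOn (fun yt : EuclideanSpace ℝ (Fin k) × ℝ => R yt.1 yt.2 v)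
      (Set.univ ×ˢ Set.Ioi (0 : ℝ))) ∧
    (∀ τ v, 0 < τ → ∀ y y',
      |R y τ v - R y' τ v| ≤ 2 * K * Real.sqrt k * Rbar / τ ^ 2 * ‖y - y'‖) := by
  classical
  set S : ℝ := K * Real.sqrt k with hS
  have hSnn : 0 ≤ S := mul_nonneg hK.le (Real.sqrt_nonneg _)
  have hbox : ∀ ϑ : EuclideanSpace ℝ (Fin k), (∀ i, |ϑ i| ≤ K) → ‖ϑ‖ ≤ S := by
    intro ϑ h
    rw [EuclideanSpace.norm_eq]
    have hk0 : (0:ℝ) ≤ (k:ℝ) := Nat.cast_nonneg k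
    have h1 : ∑ i, ‖ϑ i‖ ^ 2 ≤ (k:ℝ) * K^2 := by
      calc ∑ i, ‖ϑ i‖ ^ 2 ≤ ∑ _i : Fin k, K^2 := by
            apply Finset.sum_le_sum; intro i _
            have := h i
            rw [Real.norm_eq_abs]
            nlinarith [abs_nonneg (ϑ i)]
        _ = (k:ℝ) * K^2 := by simp [Finset.sum_const, mul_comm]
    have h3 : Real.sqrt ((k:ℝ) * K^2) = S := by
      rw [Real.sqrt_mul hk0, Real.sqrt_sq hK.le, hS]; ring
    calc Real.sqrt (∑ i, ‖ϑ i‖^2) ≤ Real.sqrt ((k:ℝ)*K^2) := Real.sqrt_le_sqrt h1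
      _ = S := h3
  -- measurability
  have hmeasw : ∀ (y : EuclideanSpace ℝ (Fin k)) (τ : ℝ),
      Measurable fun ϑ : EuclideanSpace ℝ (Fin k) =>
        Real.exp (-‖y - ϑ‖ ^ 2 / (2 * τ ^ 2)) := by
    intro y τ; fun_prop
  have hmeasl : ∀ d : EuclideanSpace ℝ (Fin k),
      Measurable fun ϑ : EuclideanSpace ℝ (Fin k) => ℓ ϑ d := by
    intro d
    exact hℓmeas.comp (measurable_id.prodMk measurable_const)
  -- uniform bound on ℓ over the box
  have hlbound : ∀ (d ϑ : EuclideanSpace ℝ (Fin k)), (∀ i, |ϑ i| ≤ K) →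
      ℓ ϑ d ≤ ℓ 0 d + |C| * (1 + (S + ‖d‖) + ‖d‖) * S := by
    intro d ϑ hϑ
    have hϑS : ‖ϑ‖ ≤ S := hbox ϑ hϑ
    have h := hℓPL ϑ d 0 d
    have hp1 : ‖(ϑ - 0, d - d)‖ = ‖ϑ‖ := by
      simp [Prod.norm_def]
    have hp3 : ‖((0 : EuclideanSpace ℝ (Fin k)), d)‖ = ‖d‖ := by
      simp [Prod.norm_def]
    have hp2 : ‖(ϑ, d)‖ ≤ S + ‖d‖ := by
      rw [Prod.norm_def]
      exact max_le (by linarith [norm_nonneg d]) (by linarith)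
    rw [hp1, hp3] at h
    have hstep : C * (1 + ‖(ϑ, d)‖ + ‖d‖) * ‖ϑ‖ ≤ |C| * (1 + (S + ‖d‖) + ‖d‖) * S := by
      have hA : 1 + ‖(ϑ, d)‖ + ‖d‖ ≤ 1 + (S + ‖d‖) + ‖d‖ := by linarith
      have hAnn : (0:ℝ) ≤ 1 + ‖(ϑ, d)‖ + ‖d‖ := by positivity
      calc C * (1 + ‖(ϑ, d)‖ + ‖d‖) * ‖ϑ‖
          ≤ |C| * (1 + ‖(ϑ, d)‖ + ‖d‖) * ‖ϑ‖ := by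
            apply mul_le_mul_of_nonneg_right
              (mul_le_mul_of_nonneg_right (le_abs_self C) hAnn) (norm_nonneg _)
        _ ≤ |C| * (1 + (S + ‖d‖) + ‖d‖) * S := by
            apply mul_le_mul (mul_le_mul_of_nonneg_left hA (abs_nonneg C)) hϑS
              (norm_nonneg _) (by positivity)
    have := le_of_abs_le h
    linarith
  -- Rbar facts
  have hbddA : BddAbove {r : ℝ | ∃ ϑ : EuclideanSpace ℝ (Fin k),
      (∀ i, |ϑ i| ≤ K) ∧ r = ℓ ϑ 0} := by
    refine ⟨ℓ 0 0 + |C| * (1 + (S + ‖(0 : EuclideanSpace ℝ (Fin k))‖) +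
      ‖(0 : EuclideanSpace ℝ (Fin k))‖) * S, ?_⟩
    rintro r ⟨ϑ, hϑ, rfl⟩
    exact hlbound 0 ϑ hϑ
  have hzero_box : ∀ i, |(0 : EuclideanSpace ℝ (Fin k)) i| ≤ K := by
    intro i; simpa using hK.le
  have hRbarMem : ∀ ϑ : EuclideanSpace ℝ (Fin k), (∀ i, |ϑ i| ≤ K) → ℓ ϑ 0 ≤ Rbar := by
    intro ϑ hϑ
    rw [hRbar]
    exact le_csSup hbddA ⟨ϑ, hϑ, rfl⟩
  have hRbar0 : 0 ≤ Rbar := le_trans (hℓnonneg 0 0) (hRbarMem 0 hzero_box)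
  -- weight facts
  have hwle1 : ∀ (y ϑ : EuclideanSpace ℝ (Fin k)) (τ : ℝ),
      Real.exp (-‖y - ϑ‖ ^ 2 / (2 * τ ^ 2)) ≤ 1 := by
    intro y ϑ τ
    rw [Real.exp_le_one_iff]
    exact div_nonpos_of_nonpos_of_nonneg (neg_nonpos.mpr (by positivity)) (by positivity)
  have hIntw : ∀ (v y : EuclideanSpace ℝ (Fin k)) (τ : ℝ),
      Integrable (fun ϑ => Real.exp (-‖y - ϑ‖ ^ 2 / (2 * τ ^ 2))) (κ v) := by
    intro v y τ
    refine Integrable.mono' (integrable_const 1) (hmeasw y τ).aestronglyMeasurable ?_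
    refine Filter.Eventually.of_forall fun ϑ => ?_
    rw [Real.norm_eq_abs, abs_of_pos (Real.exp_pos _)]
    exact hwle1 y ϑ τ
  have hInt : ∀ (v y : EuclideanSpace ℝ (Fin k)) (τ : ℝ) (d : EuclideanSpace ℝ (Fin k)),
      Integrable (fun ϑ => ℓ ϑ d * Real.exp (-‖y - ϑ‖ ^ 2 / (2 * τ ^ 2))) (κ v) := by
    intro v y τ d
    refine Integrable.mono' (integrable_const (ℓ 0 d + |C| * (1 + (S + ‖d‖) + ‖d‖) * S))
      (((hmeasl d).mul (hmeasw y τ)).aestronglyMeasurable) ?_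
    filter_upwards [hκsupp v] with ϑ hϑ
    rw [Real.norm_eq_abs, abs_of_nonneg (mul_nonneg (hℓnonneg _ _) (Real.exp_pos _).le)]
    calc ℓ ϑ d * Real.exp (-‖y - ϑ‖ ^ 2 / (2 * τ ^ 2)) ≤ ℓ ϑ d :=
          mul_le_of_le_one_right (hℓnonneg _ _) (hwle1 y ϑ τ)
      _ ≤ ℓ 0 d + |C| * (1 + (S + ‖d‖) + ‖d‖) * S := hlbound d ϑ hϑ
  have hZpos : ∀ (v y : EuclideanSpace ℝ (Fin k)) (τ : ℝ),
      0 < ∫ ϑ, Real.exp (-‖y - ϑ‖ ^ 2 / (2 * τ ^ 2)) ∂(κ v) := by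
    intro v y τ
    rw [integral_pos_iff_support_of_nonneg (fun ϑ => (Real.exp_pos _).le) (hIntw v y τ)]
    have hsup : (Function.support fun ϑ : EuclideanSpace ℝ (Fin k) =>
        Real.exp (-‖y - ϑ‖ ^ 2 / (2 * τ ^ 2))) = Set.univ :=
      Set.eq_univ_of_forall fun ϑ => (Real.exp_pos _).ne'
    rw [hsup]
    simp
  have hNnn : ∀ (v y : EuclideanSpace ℝ (Fin k)) (τ : ℝ) (d : EuclideanSpace ℝ (Fin k)),
      0 ≤ ∫ ϑ, ℓ ϑ d * Real.exp (-‖y - ϑ‖ ^ 2 / (2 * τ ^ 2)) ∂(κ v) :=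
    fun v y τ d => integral_nonneg fun ϑ => mul_nonneg (hℓnonneg _ _) (Real.exp_pos _).le
  haveI hDne : Nonempty {d : EuclideanSpace ℝ (Fin k) // ∀ i, ENNReal.ofReal |d i| ≤ M} :=
    ⟨⟨0, fun i => by simp⟩⟩
  have hBdd : ∀ (v y : EuclideanSpace ℝ (Fin k)) (τ : ℝ),
      BddBelow (Set.range fun d : {d : EuclideanSpace ℝ (Fin k) //
          ∀ i, ENNReal.ofReal |d i| ≤ M} =>
        (∫ ϑ, ℓ ϑ d.1 * Real.exp (-‖y - ϑ‖ ^ 2 / (2 * τ ^ 2)) ∂(κ v)) /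
          (∫ ϑ, Real.exp (-‖y - ϑ‖ ^ 2 / (2 * τ ^ 2)) ∂(κ v))) := by
    intro v y τ
    refine ⟨0, ?_⟩
    rintro r ⟨d, rfl⟩
    exact div_nonneg (hNnn v y τ d.1) (hZpos v y τ).le
  have hRnn : ∀ (y : EuclideanSpace ℝ (Fin k)) (τ : ℝ) (v : EuclideanSpace ℝ (Fin k)),
      0 ≤ R y τ v := by
    intro y τ v
    rw [hR]
    exact le_ciInf fun d => div_nonneg (hNnn v y τ d.1) (hZpos v y τ).le
  -- Part 1
  have hRleRbar : ∀ (y : EuclideanSpace ℝ (Fin k)) (τ : ℝ) (v : EuclideanSpace ℝ (Fin k)),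
      R y τ v ≤ Rbar := by
    intro y τ v
    rw [hR]
    refine ciInf_le_of_le (hBdd v y τ) ⟨0, fun i => by simp⟩ ?_
    rw [div_le_iff₀ (hZpos v y τ)]
    calc (∫ ϑ, ℓ ϑ 0 * Real.exp (-‖y - ϑ‖ ^ 2 / (2 * τ ^ 2)) ∂(κ v))
        ≤ ∫ ϑ, Rbar * Real.exp (-‖y - ϑ‖ ^ 2 / (2 * τ ^ 2)) ∂(κ v) := by
          refine integral_mono_ae (hInt v y τ 0) ((hIntw v y τ).const_mul Rbar) ?_
          filter_upwards [hκsupp v] with ϑ hϑ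
          exact mul_le_mul_of_nonneg_right (hRbarMem ϑ hϑ) (Real.exp_pos _).le
      _ = Rbar * ∫ ϑ, Real.exp (-‖y - ϑ‖ ^ 2 / (2 * τ ^ 2)) ∂(κ v) := integral_const_mul _ _
  -- Key comparison lemma
  have hKey : ∀ (v y : EuclideanSpace ℝ (Fin k)) (τ : ℝ) (y' : EuclideanSpace ℝ (Fin k))
      (τ' : ℝ) (c Δ : ℝ), 0 ≤ Δ →
      (∀ ϑ : EuclideanSpace ℝ (Fin k), (∀ i, |ϑ i| ≤ K) →
        |(-‖y - ϑ‖ ^ 2 / (2 * τ ^ 2)) - (-‖y' - ϑ‖ ^ 2 / (2 * τ' ^ 2)) - c| ≤ Δ) →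
      R y τ v ≤ Real.exp (2 * Δ) * R y' τ' v := by
    intro v y τ y' τ' c Δ hΔ hbd
    have hNle : ∀ d : EuclideanSpace ℝ (Fin k),
        (∫ ϑ, ℓ ϑ d * Real.exp (-‖y - ϑ‖ ^ 2 / (2 * τ ^ 2)) ∂(κ v)) ≤
        Real.exp (c + Δ) * ∫ ϑ, ℓ ϑ d * Real.exp (-‖y' - ϑ‖ ^ 2 / (2 * τ' ^ 2)) ∂(κ v) := by
      intro d
      rw [← integral_const_mul]
      refine integral_mono_ae (hInt v y τ d) (((hInt v y' τ' d).const_mul _)) ?_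
      filter_upwards [hκsupp v] with ϑ hϑ
      have hub : Real.exp (-‖y - ϑ‖ ^ 2 / (2 * τ ^ 2)) ≤
          Real.exp (c + Δ) * Real.exp (-‖y' - ϑ‖ ^ 2 / (2 * τ' ^ 2)) := by
        rw [← Real.exp_add]
        exact Real.exp_le_exp.mpr (by have := abs_le.mp (hbd ϑ hϑ); linarith)
      calc ℓ ϑ d * Real.exp (-‖y - ϑ‖ ^ 2 / (2 * τ ^ 2))
          ≤ ℓ ϑ d * (Real.exp (c + Δ) * Real.exp (-‖y' - ϑ‖ ^ 2 / (2 * τ' ^ 2))) :=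
            mul_le_mul_of_nonneg_left hub (hℓnonneg _ _)
        _ = Real.exp (c + Δ) * (ℓ ϑ d * Real.exp (-‖y' - ϑ‖ ^ 2 / (2 * τ' ^ 2))) := by ring
    have hZge : Real.exp (c - Δ) * (∫ ϑ, Real.exp (-‖y' - ϑ‖ ^ 2 / (2 * τ' ^ 2)) ∂(κ v)) ≤
        ∫ ϑ, Real.exp (-‖y - ϑ‖ ^ 2 / (2 * τ ^ 2)) ∂(κ v) := by
      rw [← integral_const_mul]
      refine integral_mono_ae ((hIntw v y' τ').const_mul _) (hIntw v y τ) ?_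
      filter_upwards [hκsupp v] with ϑ hϑ
      rw [← Real.exp_add]
      exact Real.exp_le_exp.mpr (by have := abs_le.mp (hbd ϑ hϑ); linarith)
    have hratio : ∀ d : EuclideanSpace ℝ (Fin k),
        (∫ ϑ, ℓ ϑ d * Real.exp (-‖y - ϑ‖ ^ 2 / (2 * τ ^ 2)) ∂(κ v)) /
          (∫ ϑ, Real.exp (-‖y - ϑ‖ ^ 2 / (2 * τ ^ 2)) ∂(κ v)) ≤
        Real.exp (2 * Δ) *
          ((∫ ϑ, ℓ ϑ d * Real.exp (-‖y' - ϑ‖ ^ 2 / (2 * τ' ^ 2)) ∂(κ v)) /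
            (∫ ϑ, Real.exp (-‖y' - ϑ‖ ^ 2 / (2 * τ' ^ 2)) ∂(κ v))) := by
      intro d
      have h1 := div_le_div₀ (mul_nonneg (Real.exp_pos (c + Δ)).le (hNnn v y' τ' d))
        (hNle d) (mul_pos (Real.exp_pos (c - Δ)) (hZpos v y' τ')) hZge
      have h2 : (Real.exp (c + Δ) *
            (∫ ϑ, ℓ ϑ d * Real.exp (-‖y' - ϑ‖ ^ 2 / (2 * τ' ^ 2)) ∂(κ v))) /
          (Real.exp (c - Δ) * (∫ ϑ, Real.exp (-‖y' - ϑ‖ ^ 2 / (2 * τ' ^ 2)) ∂(κ v))) =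
          Real.exp (2 * Δ) *
            ((∫ ϑ, ℓ ϑ d * Real.exp (-‖y' - ϑ‖ ^ 2 / (2 * τ' ^ 2)) ∂(κ v)) /
              (∫ ϑ, Real.exp (-‖y' - ϑ‖ ^ 2 / (2 * τ' ^ 2)) ∂(κ v))) := by
        rw [mul_div_mul_comm, ← Real.exp_sub]
        congr 2
        ring
      rw [h2] at h1
      exact h1
    have hEpos : (0:ℝ) < Real.exp (2 * Δ) := Real.exp_pos _
    rw [hR, hR]
    have hdd : ∀ dd : {d : EuclideanSpace ℝ (Fin k) // ∀ i, ENNReal.ofReal |d i| ≤ M},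
        (⨅ d : {d : EuclideanSpace ℝ (Fin k) // ∀ i, ENNReal.ofReal |d i| ≤ M},
          (∫ ϑ, ℓ ϑ d.1 * Real.exp (-‖y - ϑ‖ ^ 2 / (2 * τ ^ 2)) ∂(κ v)) /
            (∫ ϑ, Real.exp (-‖y - ϑ‖ ^ 2 / (2 * τ ^ 2)) ∂(κ v))) / Real.exp (2 * Δ) ≤
        (∫ ϑ, ℓ ϑ dd.1 * Real.exp (-‖y' - ϑ‖ ^ 2 / (2 * τ' ^ 2)) ∂(κ v)) /
          (∫ ϑ, Real.exp (-‖y' - ϑ‖ ^ 2 / (2 * τ' ^ 2)) ∂(κ v)) := by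
      intro dd
      rw [div_le_iff₀ hEpos]
      exact le_trans (le_trans (ciInf_le (hBdd v y τ) dd) (hratio dd.1)) (mul_comm _ _).le
    have h3 := le_ciInf hdd
    rw [div_le_iff₀ hEpos] at h3
    exact h3.trans (mul_comm _ _).le
  -- y-step estimate
  have hYstep : ∀ (v p q : EuclideanSpace ℝ (Fin k)) (τ : ℝ), 0 < τ →
      R p τ v ≤ Real.exp (2 * (S * ‖p - q‖ / τ ^ 2)) * R q τ v := by
    intro v p q τ hτ
    refine hKey v p τ q τ ((‖q‖ ^ 2 - ‖p‖ ^ 2) / (2 * τ ^ 2)) (S * ‖p - q‖ / τ ^ 2)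
      (by positivity) ?_
    intro ϑ hϑ
    have hϑS := hbox ϑ hϑ
    have hexp : (-‖p - ϑ‖ ^ 2 / (2 * τ ^ 2)) - (-‖q - ϑ‖ ^ 2 / (2 * τ ^ 2)) -
        (‖q‖ ^ 2 - ‖p‖ ^ 2) / (2 * τ ^ 2) = (inner ℝ (p - q) ϑ : ℝ) / τ ^ 2 := by
      have e1 : ‖p - ϑ‖ ^ 2 = ‖p‖ ^ 2 - 2 * (inner ℝ p ϑ : ℝ) + ‖ϑ‖ ^ 2 := norm_sub_sq_real p ϑ
      have e2 : ‖q - ϑ‖ ^ 2 = ‖q‖ ^ 2 - 2 * (inner ℝ q ϑ : ℝ) + ‖ϑ‖ ^ 2 := norm_sub_sq_real q ϑ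
      have e3 : (inner ℝ (p - q) ϑ : ℝ) = (inner ℝ p ϑ : ℝ) - (inner ℝ q ϑ : ℝ) :=
        inner_sub_left p q ϑ
      rw [e1, e2, e3]
      have hτ2 : (τ:ℝ) ^ 2 ≠ 0 := by positivity
      field_simp
      ring
    rw [hexp, abs_div, abs_of_pos (by positivity : (0:ℝ) < τ ^ 2)]
    have hin : |(inner ℝ (p - q) ϑ : ℝ)| ≤ S * ‖p - q‖ := by
      calc |(inner ℝ (p - q) ϑ : ℝ)| ≤ ‖p - q‖ * ‖ϑ‖ := abs_real_inner_le_norm _ _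
        _ ≤ ‖p - q‖ * S := mul_le_mul_of_nonneg_left hϑS (norm_nonneg _)
        _ = S * ‖p - q‖ := mul_comm _ _
    gcongr
  -- Part 3
  have part3 : ∀ (τ : ℝ) (v : EuclideanSpace ℝ (Fin k)), 0 < τ →
      ∀ y y' : EuclideanSpace ℝ (Fin k),
      |R y τ v - R y' τ v| ≤ 2 * K * Real.sqrt k * Rbar / τ ^ 2 * ‖y - y'‖ := by
    intro τ v hτ
    have onesided : ∀ y y' : EuclideanSpace ℝ (Fin k),
        R y τ v - R y' τ v ≤ 2 * K * Real.sqrt k * Rbar / τ ^ 2 * ‖y - y'‖ := by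
      intro y y'
      have hδnn : (0:ℝ) ≤ ‖y - y'‖ := norm_nonneg _
      set δ : ℝ := ‖y - y'‖ with hδdef
      set x : ℝ := 2 * S * δ / τ ^ 2 with hxdef
      have hxnn : 0 ≤ x := by positivity
      have goal_eq : 2 * K * Real.sqrt k * Rbar / τ ^ 2 * δ = Rbar * x := by
        rw [hxdef, hS]; field_simp
      rw [goal_eq]
      refine le_of_forall_pos_le_add ?_
      intro ε hε
      obtain ⟨n₀, hn₀⟩ := exists_nat_gt (Rbar * x ^ 2 * Real.exp x / ε)
      set n : ℕ := n₀ + 1 with hn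
      have hn_pos : (0:ℝ) < (n:ℝ) := by positivity
      have hn1 : (1:ℝ) ≤ (n:ℝ) := by exact_mod_cast Nat.succ_le_succ (Nat.zero_le n₀)
      have hnn : Rbar * x ^ 2 * Real.exp x / (n:ℝ) ≤ ε := by
        rw [div_le_iff₀ hn_pos]
        have h1 : Rbar * x ^ 2 * Real.exp x / ε < (n:ℝ) := by
          refine lt_of_lt_of_le hn₀ ?_
          exact_mod_cast Nat.le_succ n₀
        rw [div_lt_iff₀ hε] at h1
        linarith
      set p : ℕ → EuclideanSpace ℝ (Fin k) := fun i => y' + ((i:ℝ) / (n:ℝ)) • (y - y')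
        with hp
      have hp0 : p 0 = y' := by simp [hp]
      have hpn : p n = y := by
        rw [hp]
        simp only [div_self hn_pos.ne', one_smul]
        abel
      have hstepnorm : ∀ i : ℕ, ‖p (i+1) - p i‖ = δ / (n:ℝ) := by
        intro i
        have hdiff : p (i+1) - p i = ((1:ℝ) / (n:ℝ)) • (y - y') := by
          rw [hp]
          simp only [add_sub_add_left_eq_sub, ← sub_smul]
          congr 1
          push_cast
          ring
        rw [hdiff, norm_smul, Real.norm_eq_abs, abs_of_pos (by positivity : (0:ℝ) < 1/(n:ℝ))]
        rw [← hδdef]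
        ring
      set t : ℝ := x / (n:ℝ) with ht
      have htn : 0 ≤ t := by positivity
      have hstepR : ∀ i : ℕ, R (p (i+1)) τ v - R (p i) τ v ≤ (Real.exp t - 1) * Rbar := by
        intro i
        have h1 := hYstep v (p (i+1)) (p i) τ hτ
        rw [hstepnorm i] at h1
        have hexp_eq : 2 * (S * (δ / (n:ℝ)) / τ ^ 2) = t := by
          rw [ht, hxdef]; field_simp
        rw [hexp_eq] at h1
        have h2 : R (p i) τ v ≤ Rbar := hRleRbar _ _ v
        have h3 : 0 ≤ R (p i) τ v := hRnn _ _ v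
        have h4 : (1:ℝ) ≤ Real.exp t := Real.one_le_exp htn
        have h5 : 0 ≤ (Real.exp t - 1) * (Rbar - R (p i) τ v) :=
          mul_nonneg (by linarith) (by linarith)
        nlinarith
      have htel : R y τ v - R y' τ v = ∑ i ∈ Finset.range n,
          (R (p (i+1)) τ v - R (p i) τ v) := by
        rw [Finset.sum_range_sub (fun i => R (p i) τ v), hp0, hpn]
      rw [htel]
      have hnt : (n:ℝ) * t = x := by rw [ht]; field_simp
      have htx : t ≤ x := by rw [ht]; exact div_le_self hxnn hn1
      have hetx : Real.exp t ≤ Real.exp x := Real.exp_le_exp.mpr htx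
      calc ∑ i ∈ Finset.range n, (R (p (i+1)) τ v - R (p i) τ v)
          ≤ ∑ _i ∈ Finset.range n, (Real.exp t - 1) * Rbar :=
            Finset.sum_le_sum fun i _ => hstepR i
        _ = (n:ℝ) * ((Real.exp t - 1) * Rbar) := by
            rw [Finset.sum_const, Finset.card_range, nsmul_eq_mul]
        _ ≤ (n:ℝ) * ((t + t ^ 2 * Real.exp t) * Rbar) := by
            refine mul_le_mul_of_nonneg_left
              (mul_le_mul_of_nonneg_right ?_ hRbar0) hn_pos.le
            have := exp_aux2 t htn
            linarith
        _ = Rbar * x + Rbar * x * t * Real.exp t := by rw [← hnt]; ring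
        _ ≤ Rbar * x + ε := by
            have h5 : Rbar * x * t * Real.exp t ≤ Rbar * x ^ 2 * Real.exp x / (n:ℝ) := by
              rw [ht]
              have heq : Rbar * x * (x / (n:ℝ)) * Real.exp (x / (n:ℝ)) =
                  Rbar * x ^ 2 * Real.exp (x / (n:ℝ)) / (n:ℝ) := by ring
              rw [heq]
              have hex : Real.exp (x / (n:ℝ)) ≤ Real.exp x :=
                Real.exp_le_exp.mpr (div_le_self hxnn hn1)
              have hnum : 0 ≤ Rbar * x ^ 2 := by positivity
              gcongr
            linarith
    intro y y'
    rw [abs_sub_le_iff]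
    constructor
    · exact onesided y y'
    · have := onesided y' y
      rwa [norm_sub_rev] at this
  -- Part 2: continuity
  have part2 : ∀ v : EuclideanSpace ℝ (Fin k),
      ContinuousOn (fun yt : EuclideanSpace ℝ (Fin k) × ℝ => R yt.1 yt.2 v)
        (Set.univ ×ˢ Set.Ioi (0 : ℝ)) := by
    intro v
    intro p₀ hp₀
    have hτ₀ : (0:ℝ) < p₀.2 := hp₀.2
    set y₀ := p₀.1 with hy₀
    set τ₀ := p₀.2 with hτ₀def
    set Δf : EuclideanSpace ℝ (Fin k) × ℝ → ℝ := fun p =>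
      (‖p.1 - y₀‖ * (‖p.1‖ + ‖y₀‖ + 2 * S) +
        (‖y₀‖ + S) ^ 2 * |τ₀ ^ 2 - p.2 ^ 2| / τ₀ ^ 2) / (2 * p.2 ^ 2) with hΔf
    have hΔnn : ∀ p : EuclideanSpace ℝ (Fin k) × ℝ, 0 ≤ Δf p := by
      intro p
      apply div_nonneg _ (by positivity)
      apply add_nonneg
      · apply mul_nonneg (norm_nonneg _)
        have := norm_nonneg p.1
        have := norm_nonneg y₀
        linarith
      · positivity
    have hbound : ∀ p : EuclideanSpace ℝ (Fin k) × ℝ, 0 < p.2 →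
        ∀ ϑ : EuclideanSpace ℝ (Fin k), (∀ i, |ϑ i| ≤ K) →
        |(-‖p.1 - ϑ‖ ^ 2 / (2 * p.2 ^ 2)) - (-‖y₀ - ϑ‖ ^ 2 / (2 * τ₀ ^ 2)) - 0| ≤ Δf p := by
      intro p hp2 ϑ hϑ
      have hϑS := hbox ϑ hϑ
      have h2 : ‖p.1 - ϑ‖ ≤ ‖p.1‖ + S := (norm_sub_le _ _).trans (by linarith)
      have h3 : ‖y₀ - ϑ‖ ≤ ‖y₀‖ + S := (norm_sub_le _ _).trans (by linarith)
      have h1 : |‖y₀ - ϑ‖ - ‖p.1 - ϑ‖| ≤ ‖p.1 - y₀‖ := by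
        have h := abs_norm_sub_norm_le (y₀ - ϑ) (p.1 - ϑ)
        have he : ‖y₀ - ϑ - (p.1 - ϑ)‖ = ‖p.1 - y₀‖ := by
          rw [show y₀ - ϑ - (p.1 - ϑ) = y₀ - p.1 by abel, norm_sub_rev]
        rwa [he] at h
      have key : (-‖p.1 - ϑ‖ ^ 2 / (2 * p.2 ^ 2)) - (-‖y₀ - ϑ‖ ^ 2 / (2 * τ₀ ^ 2)) - 0 =
          (‖y₀ - ϑ‖ ^ 2 - ‖p.1 - ϑ‖ ^ 2) / (2 * p.2 ^ 2) +
            ‖y₀ - ϑ‖ ^ 2 * (p.2 ^ 2 - τ₀ ^ 2) / (2 * p.2 ^ 2 * τ₀ ^ 2) := by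
        have hp2' : p.2 ^ 2 ≠ 0 := by positivity
        have hτ2' : τ₀ ^ 2 ≠ 0 := by positivity
        field_simp
        ring
      rw [key]
      have b1 : |(‖y₀ - ϑ‖ ^ 2 - ‖p.1 - ϑ‖ ^ 2) / (2 * p.2 ^ 2)| ≤
          ‖p.1 - y₀‖ * (‖p.1‖ + ‖y₀‖ + 2 * S) / (2 * p.2 ^ 2) := by
        rw [abs_div, abs_of_pos (by positivity : (0:ℝ) < 2 * p.2 ^ 2)]
        have hnum : |‖y₀ - ϑ‖ ^ 2 - ‖p.1 - ϑ‖ ^ 2| ≤ ‖p.1 - y₀‖ * (‖p.1‖ + ‖y₀‖ + 2 * S) := by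
          have e : ‖y₀ - ϑ‖ ^ 2 - ‖p.1 - ϑ‖ ^ 2 =
              (‖y₀ - ϑ‖ - ‖p.1 - ϑ‖) * (‖y₀ - ϑ‖ + ‖p.1 - ϑ‖) := by ring
          rw [e, abs_mul, abs_of_nonneg (by positivity : (0:ℝ) ≤ ‖y₀ - ϑ‖ + ‖p.1 - ϑ‖)]
          have hsum : ‖y₀ - ϑ‖ + ‖p.1 - ϑ‖ ≤ ‖p.1‖ + ‖y₀‖ + 2 * S := by linarith
          exact mul_le_mul h1 hsum (by positivity) (norm_nonneg _)
        exact div_le_div_of_nonneg_right hnum (by positivity)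
      have b2 : |‖y₀ - ϑ‖ ^ 2 * (p.2 ^ 2 - τ₀ ^ 2) / (2 * p.2 ^ 2 * τ₀ ^ 2)| ≤
          (‖y₀‖ + S) ^ 2 * |τ₀ ^ 2 - p.2 ^ 2| / τ₀ ^ 2 / (2 * p.2 ^ 2) := by
        rw [abs_div, abs_mul, abs_of_nonneg (by positivity : (0:ℝ) ≤ ‖y₀ - ϑ‖ ^ 2),
          abs_of_pos (by positivity : (0:ℝ) < 2 * p.2 ^ 2 * τ₀ ^ 2),
          abs_sub_comm (p.2 ^ 2) (τ₀ ^ 2), div_div]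
        apply div_le_div₀ (by positivity) ?_ (by positivity) (le_of_eq (by ring))
        exact mul_le_mul_of_nonneg_right (pow_le_pow_left₀ (norm_nonneg _) h3 2) (abs_nonneg _)
      calc |(‖y₀ - ϑ‖ ^ 2 - ‖p.1 - ϑ‖ ^ 2) / (2 * p.2 ^ 2) +
            ‖y₀ - ϑ‖ ^ 2 * (p.2 ^ 2 - τ₀ ^ 2) / (2 * p.2 ^ 2 * τ₀ ^ 2)|
          ≤ |(‖y₀ - ϑ‖ ^ 2 - ‖p.1 - ϑ‖ ^ 2) / (2 * p.2 ^ 2)| +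
            |‖y₀ - ϑ‖ ^ 2 * (p.2 ^ 2 - τ₀ ^ 2) / (2 * p.2 ^ 2 * τ₀ ^ 2)| := abs_add_le _ _
        _ ≤ ‖p.1 - y₀‖ * (‖p.1‖ + ‖y₀‖ + 2 * S) / (2 * p.2 ^ 2) +
            (‖y₀‖ + S) ^ 2 * |τ₀ ^ 2 - p.2 ^ 2| / τ₀ ^ 2 / (2 * p.2 ^ 2) := add_le_add b1 b2
        _ = Δf p := by rw [hΔf]; dsimp only; rw [add_div]
    have hΔcont : ContinuousAt Δf p₀ := by
      apply ContinuousAt.div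
      · apply ContinuousAt.add
        · exact (((continuous_fst.sub continuous_const).norm).mul
            ((continuous_fst.norm.add continuous_const).add continuous_const)).continuousAt
        · apply ContinuousAt.div_const
          exact (continuous_const.mul
            ((continuous_const.sub ((continuous_snd.pow 2))).abs)).continuousAt
      · exact (continuous_const.mul (continuous_snd.pow 2)).continuousAt
      · positivity
    have hΔ0 : Δf p₀ = 0 := by
      rw [hΔf]
      simp [sub_self, hy₀, hτ₀def]
    have hGcont : ContinuousAt
        (fun p : EuclideanSpace ℝ (Fin k) × ℝ => (Real.exp (2 * Δf p) - 1) * Rbar) p₀ :=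
      (((Real.continuous_exp.continuousAt.comp (continuousAt_const.mul hΔcont))).sub
        continuousAt_const).mul continuousAt_const
    rw [Metric.continuousWithinAt_iff]
    intro ε hε
    obtain ⟨δ', hδ', hδ''⟩ := Metric.continuousAt_iff.mp hGcont ε hε
    refine ⟨δ', hδ', ?_⟩
    intro p hps hdist
    have hp2 : (0:ℝ) < p.2 := hps.2
    have hG := hδ'' hdist
    have hGp₀ : (Real.exp (2 * Δf p₀) - 1) * Rbar = 0 := by rw [hΔ0]; simp
    rw [Real.dist_eq, hGp₀, sub_zero] at hG
    have hA := hKey v p.1 p.2 y₀ τ₀ 0 (Δf p) (hΔnn p) (hbound p hp2)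
    have hB := hKey v y₀ τ₀ p.1 p.2 0 (Δf p) (hΔnn p) ?swap
    case swap =>
      intro ϑ hϑ
      have := hbound p hp2 ϑ hϑ
      rw [sub_zero] at this ⊢
      rwa [abs_sub_comm] at this
    have h1 : 0 ≤ R p.1 p.2 v := hRnn _ _ v
    have h2 : R p.1 p.2 v ≤ Rbar := hRleRbar _ _ v
    have h3 : 0 ≤ R y₀ τ₀ v := hRnn _ _ v
    have h4 : R y₀ τ₀ v ≤ Rbar := hRleRbar _ _ v
    have hexp1 : 1 ≤ Real.exp (2 * Δf p) := Real.one_le_exp (by linarith [hΔnn p])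
    have habs : |R p.1 p.2 v - R y₀ τ₀ v| ≤ (Real.exp (2 * Δf p) - 1) * Rbar := by
      rw [abs_sub_le_iff]
      constructor
      · nlinarith
      · nlinarith
    calc dist (R p.1 p.2 v) (R y₀ τ₀ v) = |R p.1 p.2 v - R y₀ τ₀ v| := Real.dist_eq _ _
      _ ≤ (Real.exp (2 * Δf p) - 1) * Rbar := habs
      _ ≤ |(Real.exp (2 * Δf p) - 1) * Rbar| := le_abs_self _
      _ < ε := hG
  exact ⟨fun y τ v _ => hRleRbar y τ v, part2, part3⟩
end

section
/- If ℓ : ℝ^k × ℝ^k → ℝ_{≥0} is a non-negative function satisfying |ℓ(ϑ,d) - ℓ(ϑ',d)| ≤ C(1 + √ℓ(ϑ,d) + √ℓ(ϑ',d))‖ϑ - ϑ'‖ for all ϑ, ϑ', d, and if ℓ(ϑ*, d) ≤ r for some ϑ* and r ≥ 0, then for all ϑ we have ℓ(ϑ, d) ≤ (1 + √r + 3C‖ϑ - ϑ*‖)². -/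
/-- If a non-negative loss `ℓ` satisfies the self-bounding growth condition
`|ℓ(ϑ,d) - ℓ(ϑ',d)| ≤ C(1 + √ℓ(ϑ,d) + √ℓ(ϑ',d))‖ϑ - ϑ'‖` and `ℓ(ϑ*, d) ≤ r`,
then `ℓ(ϑ, d) ≤ (1 + √r + 3C‖ϑ - ϑ*‖)²` for all `ϑ`. -/
theorem stmt_8 {k : ℕ} (ℓ : EuclideanSpace ℝ (Fin k) → EuclideanSpace ℝ (Fin k) → ℝ)
    (C : ℝ) (hC : 0 ≤ C)
    (hnonneg : ∀ ϑ d, 0 ≤ ℓ ϑ d)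
    (hgrowth : ∀ ϑ ϑ' d, |ℓ ϑ d - ℓ ϑ' d| ≤
      C * (1 + Real.sqrt (ℓ ϑ d) + Real.sqrt (ℓ ϑ' d)) * ‖ϑ - ϑ'‖)
    (ϑstar d : EuclideanSpace ℝ (Fin k)) (r : ℝ) (hr0 : 0 ≤ r)
    (hr : ℓ ϑstar d ≤ r) :
    ∀ ϑ, ℓ ϑ d ≤ (1 + Real.sqrt r + 3 * C * ‖ϑ - ϑstar‖) ^ 2 := by
  intro ϑ
  set t := ‖ϑ - ϑstar‖ with ht
  have ht0 : (0:ℝ) ≤ t := norm_nonneg _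
  set a := Real.sqrt (ℓ ϑ d) with ha
  set b := Real.sqrt (ℓ ϑstar d) with hb
  have ha0 : 0 ≤ a := Real.sqrt_nonneg _
  have hb0 : 0 ≤ b := Real.sqrt_nonneg _
  have ha2 : a ^ 2 = ℓ ϑ d := Real.sq_sqrt (hnonneg _ _)
  have hb2 : b ^ 2 = ℓ ϑstar d := Real.sq_sqrt (hnonneg _ _)
  have hbr : b ≤ Real.sqrt r := Real.sqrt_le_sqrt hr
  have hsr0 : 0 ≤ Real.sqrt r := Real.sqrt_nonneg _
  by_contra h
  push_neg at h
  have hX : 1 + Real.sqrt r + 3 * C * t < a := by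
    by_contra h'
    push_neg at h'
    have := pow_le_pow_left₀ ha0 h' 2
    rw [ha2] at this
    exact absurd this (not_le.mpr h)
  have hg := hgrowth ϑ ϑstar d
  rw [abs_le] at hg
  have h1 : ℓ ϑ d - ℓ ϑstar d ≤ C * (1 + a + b) * t := hg.2
  rw [← ha2, ← hb2] at h1
  have hCt : 0 ≤ C * t := mul_nonneg hC ht0
  nlinarith [mul_nonneg hCt hb0, mul_nonneg hCt hsr0, mul_nonneg hCt hCt, mul_nonneg hCt ha0]
end

section
/- Let Θ₀ take values ±μ with probability ε/2 each and 0 with probability 1-ε, and let G ∼ N(0,1) be independent. Define V_±(q) = E[E[√δ·Θ₀ | √(δq)·Θ₀ + G]²]/δ. Then V_±(q) ≤ (μ²ε²/(1-ε))·sinh(δqμ²), and V_±(q) = μ⁴ε²δ·q + O(q²) as q → 0. -/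
open MeasureTheory ProbabilityTheory Asymptotics
open scoped ProbabilityTheory

open Real Set
open scoped NNReal ENNReal

noncomputable section

lemma aux_int_gauss (c : ℝ) (f : ℝ → ℝ) :
    ∫ y, f y ∂(gaussianReal c 1) = ∫ y, gaussianPDFReal c 1 y * f y := by
  rw [gaussianReal_of_var_ne_zero c one_ne_zero]
  have h : gaussianPDF c 1 = fun x => ((Real.toNNReal (gaussianPDFReal c 1 x) : ℝ≥0) : ℝ≥0∞) := by
    funext x; simp [gaussianPDF, ENNReal.ofReal]
  rw [h, integral_withDensity_eq_integral_smul
    (by exact (measurable_gaussianPDFReal c 1).real_toNNReal)]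
  congr 1; funext y
  simp [NNReal.smul_def, Real.coe_toNNReal _ (gaussianPDFReal_nonneg c 1 y)]

lemma aux_pdf_mul_exp (c y : ℝ) :
    gaussianPDFReal 0 1 y * Real.exp (c * y) = Real.exp (c ^ 2 / 2) * gaussianPDFReal c 1 y := by
  simp only [gaussianPDFReal, NNReal.coe_one, mul_one]
  rw [mul_assoc, ← Real.exp_add, mul_comm (Real.exp (c ^ 2 / 2)), mul_assoc, ← Real.exp_add]
  congr 1
  ring

lemma aux_integral_exp (c : ℝ) :
    ∫ y, Real.exp (c * y) ∂(gaussianReal 0 1) = Real.exp (c ^ 2 / 2) := by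
  rw [aux_int_gauss]
  have : (fun y => gaussianPDFReal 0 1 y * Real.exp (c * y))
      = fun y => Real.exp (c ^ 2 / 2) * gaussianPDFReal c 1 y := by
    funext y; exact aux_pdf_mul_exp c y
  rw [this, integral_const_mul, integral_gaussianPDFReal_eq_one c one_ne_zero, mul_one]

lemma aux_integrable_exp (c : ℝ) :
    Integrable (fun y => Real.exp (c * y)) (gaussianReal 0 1) := by
  rw [gaussianReal_of_var_ne_zero 0 one_ne_zero]
  have h : gaussianPDF 0 1 = fun x => ((Real.toNNReal (gaussianPDFReal 0 1 x) : ℝ≥0) : ℝ≥0∞) := by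
    funext x; simp [gaussianPDF, ENNReal.ofReal]
  rw [h, integrable_withDensity_iff_integrable_smul
    (by exact (measurable_gaussianPDFReal 0 1).real_toNNReal)]
  have : (fun y => (Real.toNNReal (gaussianPDFReal 0 1 y)) • Real.exp (c * y))
      = fun y => Real.exp (c ^ 2 / 2) * gaussianPDFReal c 1 y := by
    funext y
    rw [NNReal.smul_def, Real.coe_toNNReal _ (gaussianPDFReal_nonneg 0 1 y)]
    exact aux_pdf_mul_exp c y
  rw [this]
  exact (integrable_gaussianPDFReal c 1).const_mul _

lemma aux_sinh_sq (b y : ℝ) : Real.sinh (b * y) ^ 2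
    = (Real.exp ((2*b) * y) + Real.exp ((-(2*b)) * y)) / 4 - 1 / 2 := by
  rw [Real.sinh_eq, show (2*b)*y = b*y + b*y by ring, show (-(2*b))*y = -(b*y) + -(b*y) by ring,
    Real.exp_add, Real.exp_add]
  have h := Real.exp_neg (b*y)
  have hp := (Real.exp_pos (b*y)).ne'
  field_simp [h]
  have h2 : Real.exp (b*y) * Real.exp (-(b*y)) = 1 := by rw [← Real.exp_add]; simp
  linear_combination (-8) * h2

lemma aux_sinh_sq_cosh (b y : ℝ) : Real.sinh (b * y) ^ 2 * Real.cosh (b * y)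
    = (Real.exp ((3*b) * y) + Real.exp ((-(3*b)) * y)
        - Real.exp (b * y) - Real.exp ((-b) * y)) / 8 := by
  rw [Real.sinh_eq, Real.cosh_eq, show (3*b)*y = b*y + b*y + b*y by ring,
    show (-(3*b))*y = -(b*y) + -(b*y) + -(b*y) by ring, show (-b)*y = -(b*y) by ring,
    Real.exp_add, Real.exp_add, Real.exp_add, Real.exp_add]
  have h := Real.exp_neg (b*y)
  field_simp [h]
  have h2 : Real.exp (b*y) * Real.exp (-(b*y)) = 1 := by rw [← Real.exp_add]; simp
  linear_combination (-8 * Real.exp (-(b*y)) - 8 * Real.exp (b*y)) * h2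

lemma aux_integrable_sinh_sq (b : ℝ) :
    Integrable (fun y => Real.sinh (b * y) ^ 2) (gaussianReal 0 1) := by
  have h1 : Integrable (fun y => (Real.exp ((2*b) * y) + Real.exp ((-(2*b)) * y)) / 4 - 1/2)
      (gaussianReal 0 1) :=
    (((aux_integrable_exp (2*b)).add (aux_integrable_exp (-(2*b)))).div_const 4).sub
      (integrable_const _)
  exact h1.congr (Filter.Eventually.of_forall fun y => (aux_sinh_sq b y).symm)

lemma aux_integral_sinh_sq (b : ℝ) :
    ∫ y, Real.sinh (b * y) ^ 2 ∂(gaussianReal 0 1) = (Real.exp (2 * b ^ 2) - 1) / 2 := by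
  have h2 : Integrable (fun y => (Real.exp ((2*b) * y) + Real.exp ((-(2*b)) * y)) / 4)
      (gaussianReal 0 1) :=
    ((aux_integrable_exp (2*b)).add (aux_integrable_exp (-(2*b)))).div_const 4
  have h3 : Integrable (fun y => Real.exp ((2*b) * y) + Real.exp ((-(2*b)) * y))
      (gaussianReal 0 1) := (aux_integrable_exp (2*b)).add (aux_integrable_exp (-(2*b)))
  calc ∫ y, Real.sinh (b * y) ^ 2 ∂(gaussianReal 0 1)
      = ∫ y, ((Real.exp ((2*b) * y) + Real.exp ((-(2*b)) * y)) / 4 - 1/2) ∂(gaussianReal 0 1) :=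
        integral_congr_ae (Filter.Eventually.of_forall fun y => aux_sinh_sq b y)
    _ = (∫ y, (Real.exp ((2*b) * y) + Real.exp ((-(2*b)) * y)) / 4 ∂(gaussianReal 0 1))
          - ∫ (_ : ℝ), (1:ℝ)/2 ∂(gaussianReal 0 1) := integral_sub h2 (integrable_const _)
    _ = (Real.exp (2 * b ^ 2) - 1) / 2 := by
        rw [integral_div, integral_add (aux_integrable_exp _) (aux_integrable_exp _),
          aux_integral_exp, aux_integral_exp, integral_const]
        simp
        rw [show (2*b)^2/2 = 2*b^2 by ring]
        ring

lemma aux_integrable_sinh_sq_cosh (b : ℝ) :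
    Integrable (fun y => Real.sinh (b * y) ^ 2 * Real.cosh (b * y)) (gaussianReal 0 1) := by
  have h1 : Integrable (fun y => (Real.exp ((3*b) * y) + Real.exp ((-(3*b)) * y)
      - Real.exp (b * y) - Real.exp ((-b) * y)) / 8) (gaussianReal 0 1) :=
    ((((aux_integrable_exp (3*b)).add (aux_integrable_exp (-(3*b)))).sub
      (aux_integrable_exp b)).sub (aux_integrable_exp (-b))).div_const 8
  exact h1.congr (Filter.Eventually.of_forall fun y => (aux_sinh_sq_cosh b y).symm)

lemma aux_integral_sinh_sq_cosh (b : ℝ) :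
    ∫ y, Real.sinh (b * y) ^ 2 * Real.cosh (b * y) ∂(gaussianReal 0 1)
      = (Real.exp (9 * b ^ 2 / 2) - Real.exp (b ^ 2 / 2)) / 4 := by
  have ha : Integrable (fun y => Real.exp ((3*b) * y) + Real.exp ((-(3*b)) * y))
      (gaussianReal 0 1) := (aux_integrable_exp (3*b)).add (aux_integrable_exp (-(3*b)))
  have hb' : Integrable (fun y => Real.exp ((3*b) * y) + Real.exp ((-(3*b)) * y)
      - Real.exp (b * y)) (gaussianReal 0 1) := ha.sub (aux_integrable_exp b)
  have hc : Integrable (fun y => Real.exp ((3*b) * y) + Real.exp ((-(3*b)) * y)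
      - Real.exp (b * y) - Real.exp ((-b) * y)) (gaussianReal 0 1) :=
    hb'.sub (aux_integrable_exp (-b))
  calc ∫ y, Real.sinh (b * y) ^ 2 * Real.cosh (b * y) ∂(gaussianReal 0 1)
      = ∫ y, (Real.exp ((3*b) * y) + Real.exp ((-(3*b)) * y)
          - Real.exp (b * y) - Real.exp ((-b) * y)) / 8 ∂(gaussianReal 0 1) :=
        integral_congr_ae (Filter.Eventually.of_forall fun y => aux_sinh_sq_cosh b y)
    _ = (∫ y, (Real.exp ((3*b) * y) + Real.exp ((-(3*b)) * y)
          - Real.exp (b * y) - Real.exp ((-b) * y)) ∂(gaussianReal 0 1)) / 8 := integral_div _ _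
    _ = (Real.exp (9 * b ^ 2 / 2) - Real.exp (b ^ 2 / 2)) / 4 := by
        rw [integral_sub hb' (aux_integrable_exp (-b)), integral_sub ha (aux_integrable_exp b),
          integral_add (aux_integrable_exp _) (aux_integrable_exp _),
          aux_integral_exp, aux_integral_exp, aux_integral_exp, aux_integral_exp]
        rw [show (-(3*b))^2/2 = 9*b^2/2 by ring, show (3*b)^2/2 = 9*b^2/2 by ring,
          show (-b)^2/2 = b^2/2 by ring]
        ring

lemma aux_int_dirac {f : ℝ → ℝ} (x : ℝ) : Integrable f (Measure.dirac x) :=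
  (integrable_const (f x)).congr (by
    rw [MeasureTheory.ae_dirac_eq]; exact Filter.eventually_pure.2 rfl)

lemma aux_three (ε mu : ℝ) (hε0 : 0 ≤ ε) (hε1 : ε ≤ 1) (f : ℝ → ℝ) :
    ∫ θ, f θ ∂(ENNReal.ofReal (1 - ε) • Measure.dirac (0:ℝ) +
      ENNReal.ofReal (ε/2) • Measure.dirac mu + ENNReal.ofReal (ε/2) • Measure.dirac (-mu))
    = (1-ε) * f 0 + (ε/2) * f mu + (ε/2) * f (-mu) := by
  have h1 : Integrable f (ENNReal.ofReal (1-ε) • Measure.dirac (0:ℝ)) :=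
    (aux_int_dirac 0).smul_measure ENNReal.ofReal_ne_top
  have h2 : Integrable f (ENNReal.ofReal (ε/2) • Measure.dirac mu) :=
    (aux_int_dirac mu).smul_measure ENNReal.ofReal_ne_top
  have h3 : Integrable f (ENNReal.ofReal (ε/2) • Measure.dirac (-mu)) :=
    (aux_int_dirac (-mu)).smul_measure ENNReal.ofReal_ne_top
  rw [integral_add_measure (h1.add_measure h2) h3, integral_add_measure h1 h2,
    integral_smul_measure, integral_smul_measure, integral_smul_measure,
    integral_dirac, integral_dirac, integral_dirac,
    ENNReal.toReal_ofReal (by linarith), ENNReal.toReal_ofReal (by linarith)]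
  simp [smul_eq_mul]


/-- shift a gaussian integral to Lebesgue with pdf -/
lemma aux_shift (c : ℝ) (h : ℝ → ℝ) (hh : Measurable h) :
    ∫ g, h (c + g) ∂(gaussianReal 0 1) = ∫ y, gaussianPDFReal c 1 y * h y := by
  have : ∫ g, h (c + g) ∂(gaussianReal 0 1) = ∫ y, h y ∂((gaussianReal 0 1).map (c + ·)) := by
    rw [integral_map (by fun_prop) hh.aestronglyMeasurable]
  rw [this, gaussianReal_map_const_add, zero_add, aux_int_gauss]


lemma aux_reduce {Ω : Type*} [MeasureSpace Ω] [IsProbabilityMeasure (ℙ : Measure Ω)]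
    (ε mu : ℝ) (hε0 : 0 ≤ ε) (hε1 : ε ≤ 1)
    (Θ G : Ω → ℝ) (hΘmeas : Measurable Θ) (hGmeas : Measurable G)
    (hΘlaw : Measure.map Θ ℙ =
      ENNReal.ofReal (1 - ε) • Measure.dirac (0 : ℝ) +
        ENNReal.ofReal (ε / 2) • Measure.dirac mu +
        ENNReal.ofReal (ε / 2) • Measure.dirac (-mu))
    (hGlaw : Measure.map G ℙ = gaussianReal 0 1)
    (hindep : IndepFun Θ G)
    (f : ℝ → ℝ → ℝ) (hf : Measurable (Function.uncurry f)) (C : ℝ)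
    (hfb : ∀ θ g, |f θ g| ≤ C) :
    ∫ ω, f (Θ ω) (G ω) ∂ℙ
      = (1-ε) * (∫ g, f 0 g ∂(gaussianReal 0 1)) + (ε/2) * (∫ g, f mu g ∂(gaussianReal 0 1))
        + (ε/2) * (∫ g, f (-mu) g ∂(gaussianReal 0 1)) := by
  have hpair : Measurable (fun ω => (Θ ω, G ω)) := hΘmeas.prodMk hGmeas
  have hmap : Measure.map (fun ω => (Θ ω, G ω)) ℙ
      = (Measure.map Θ ℙ).prod (Measure.map G ℙ) :=
    (indepFun_iff_map_prod_eq_prod_map_map hΘmeas.aemeasurable hGmeas.aemeasurable).mp hindep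
  haveI : IsProbabilityMeasure (Measure.map Θ ℙ) := Measure.isProbabilityMeasure_map hΘmeas.aemeasurable
  haveI : IsProbabilityMeasure (Measure.map G ℙ) := Measure.isProbabilityMeasure_map hGmeas.aemeasurable
  have hint : Integrable (fun p : ℝ × ℝ => f p.1 p.2)
      ((Measure.map Θ ℙ).prod (Measure.map G ℙ)) := by
    refine (integrable_const C).mono' hf.aestronglyMeasurable ?_
    exact Filter.Eventually.of_forall fun p => by simpa [Real.norm_eq_abs] using hfb p.1 p.2
  have h1 : ∫ ω, f (Θ ω) (G ω) ∂ℙ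
      = ∫ p : ℝ × ℝ, f p.1 p.2 ∂((Measure.map Θ ℙ).prod (Measure.map G ℙ)) := by
    rw [← hmap]
    exact (integral_map hpair.aemeasurable
      (show AEStronglyMeasurable (fun p : ℝ × ℝ => f p.1 p.2) _ from hf.aestronglyMeasurable)).symm
  rw [h1, integral_prod _ hint]
  rw [hΘlaw, hGlaw]
  exact aux_three ε mu hε0 hε1 _

def auxD (ε b y : ℝ) : ℝ := (1 - ε) + ε * Real.exp (-(b^2/2)) * Real.cosh (b*y)

def auxPhi (ε mu δ b y : ℝ) : ℝ :=
  Real.sqrt δ * mu * ε * Real.exp (-(b^2/2)) * Real.sinh (b*y) / auxD ε b y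

lemma auxD_pos {ε : ℝ} (hε0 : 0 ≤ ε) (hε1 : ε < 1) (b y : ℝ) : 0 < auxD ε b y := by
  have h1 : 0 ≤ ε * Real.exp (-(b^2/2)) * Real.cosh (b*y) :=
    mul_nonneg (mul_nonneg hε0 (Real.exp_pos _).le) (Real.cosh_pos _).le
  unfold auxD; linarith

lemma aux_abs_sinh_le_cosh (x : ℝ) : |Real.sinh x| ≤ Real.cosh x := by
  rw [← Real.sqrt_sq (Real.cosh_pos x).le, ← Real.sqrt_sq_eq_abs]
  apply Real.sqrt_le_sqrt
  rw [Real.cosh_sq']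
  nlinarith [Real.sinh_sq x]

lemma auxPhi_meas (ε mu δ b : ℝ) : Measurable (auxPhi ε mu δ b) := by
  unfold auxPhi auxD; fun_prop

lemma auxPhi_abs_le {ε mu δ : ℝ} (hε0 : 0 ≤ ε) (hε1 : ε < 1) (hmu : 0 ≤ mu) (b y : ℝ) :
    |auxPhi ε mu δ b y| ≤ Real.sqrt δ * mu := by
  have hD := auxD_pos hε0 hε1 b y
  rw [auxPhi, abs_div, abs_of_pos hD, div_le_iff₀ hD]
  have h1 : |Real.sqrt δ * mu * ε * Real.exp (-(b^2/2)) * Real.sinh (b*y)|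
      = Real.sqrt δ * mu * (ε * Real.exp (-(b^2/2)) * |Real.sinh (b*y)|) := by
    rw [abs_mul, abs_of_nonneg (by positivity :
      (0:ℝ) ≤ Real.sqrt δ * mu * ε * Real.exp (-(b^2/2)))]
    ring
  rw [h1]
  have h2 : ε * Real.exp (-(b^2/2)) * |Real.sinh (b*y)| ≤ auxD ε b y := by
    have := aux_abs_sinh_le_cosh (b*y)
    have h3 : ε * Real.exp (-(b^2/2)) * |Real.sinh (b*y)|
        ≤ ε * Real.exp (-(b^2/2)) * Real.cosh (b*y) :=
      mul_le_mul_of_nonneg_left this (mul_nonneg hε0 (Real.exp_pos _).le)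
    unfold auxD; linarith
  calc Real.sqrt δ * mu * (ε * Real.exp (-(b^2/2)) * |Real.sinh (b*y)|)
      ≤ Real.sqrt δ * mu * auxD ε b y :=
        mul_le_mul_of_nonneg_left h2 (mul_nonneg (Real.sqrt_nonneg δ) hmu)
    _ = _ := by ring

lemma aux_pdf_shift (c y : ℝ) : gaussianPDFReal c 1 y
    = gaussianPDFReal 0 1 y * Real.exp (-(c^2/2)) * Real.exp (c*y) := by
  simp only [gaussianPDFReal, NNReal.coe_one, mul_one]
  rw [mul_assoc, mul_assoc, ← Real.exp_add, ← Real.exp_add]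
  congr 1
  ring

lemma aux_mix_pdf (ε b y : ℝ) :
    (1-ε) * gaussianPDFReal 0 1 y + (ε/2) * gaussianPDFReal b 1 y
      + (ε/2) * gaussianPDFReal (-b) 1 y = gaussianPDFReal 0 1 y * auxD ε b y := by
  rw [aux_pdf_shift b, aux_pdf_shift (-b)]
  unfold auxD
  simp only [Real.cosh_eq, neg_sq, neg_mul, Real.exp_neg]
  ring

lemma aux_key1 {ε mu δ : ℝ} (hε0 : 0 ≤ ε) (hε1 : ε < 1) (b y : ℝ) :
    ((1-ε) * gaussianPDFReal 0 1 y + (ε/2) * gaussianPDFReal b 1 y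
      + (ε/2) * gaussianPDFReal (-b) 1 y) * auxPhi ε mu δ b y
    = (ε/2) * (Real.sqrt δ * mu)
        * (gaussianPDFReal b 1 y - gaussianPDFReal (-b) 1 y) := by
  have hD := (auxD_pos hε0 hε1 b y).ne'
  rw [aux_mix_pdf, auxPhi]
  have h0 : gaussianPDFReal 0 1 y * auxD ε b y
      * (Real.sqrt δ * mu * ε * Real.exp (-(b^2/2)) * Real.sinh (b*y) / auxD ε b y)
      = gaussianPDFReal 0 1 y
        * (Real.sqrt δ * mu * ε * Real.exp (-(b^2/2)) * Real.sinh (b*y)) := by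
    field_simp
  rw [h0, aux_pdf_shift b, aux_pdf_shift (-b)]
  simp only [Real.sinh_eq, neg_sq, neg_mul, Real.exp_neg]
  ring

lemma aux_key2 {ε mu δ : ℝ} (hε0 : 0 ≤ ε) (hε1 : ε < 1) (hδ : 0 ≤ δ) (b y : ℝ) :
    ((1-ε) * gaussianPDFReal 0 1 y + (ε/2) * gaussianPDFReal b 1 y
      + (ε/2) * gaussianPDFReal (-b) 1 y) * (auxPhi ε mu δ b y)^2
    = δ * mu^2 * ε^2 * Real.exp (-b^2)
        * (gaussianPDFReal 0 1 y * (Real.sinh (b*y)^2 / auxD ε b y)) := by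
  have hD := (auxD_pos hε0 hε1 b y).ne'
  have hs : Real.sqrt δ * Real.sqrt δ = δ := Real.mul_self_sqrt hδ
  have hE : Real.exp (-(b^2/2)) * Real.exp (-(b^2/2)) = Real.exp (-b^2) := by
    rw [← Real.exp_add]; ring_nf
  have h2 : δ * mu^2 * ε^2 * Real.exp (-b^2)
      = (Real.sqrt δ * mu * ε * Real.exp (-(b^2/2)))
        * (Real.sqrt δ * mu * ε * Real.exp (-(b^2/2))) := by
    rw [show (Real.sqrt δ * mu * ε * Real.exp (-(b^2/2)))
        * (Real.sqrt δ * mu * ε * Real.exp (-(b^2/2)))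
      = (Real.sqrt δ * Real.sqrt δ) * (mu^2 * ε^2)
        * (Real.exp (-(b^2/2)) * Real.exp (-(b^2/2))) by ring, hs, hE]
    ring
  rw [aux_mix_pdf, auxPhi, h2]
  field_simp

lemma aux_int_pdf_mul (c C : ℝ) (h : ℝ → ℝ) (hmeas : Measurable h) (hb : ∀ y, |h y| ≤ C) :
    Integrable (fun y => gaussianPDFReal c 1 y * h y) := by
  refine ((integrable_gaussianPDFReal c 1).const_mul C).mono'
    ((measurable_gaussianPDFReal c 1).mul hmeas).aestronglyMeasurable ?_
  refine Filter.Eventually.of_forall fun y => ?_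
  rw [Real.norm_eq_abs, abs_mul, abs_of_nonneg (gaussianPDFReal_nonneg c 1 y)]
  calc gaussianPDFReal c 1 y * |h y| ≤ gaussianPDFReal c 1 y * C :=
        mul_le_mul_of_nonneg_left (hb y) (gaussianPDFReal_nonneg c 1 y)
    _ = C * gaussianPDFReal c 1 y := mul_comm _ _

lemma aux_theta_bdd {Ω : Type*} [MeasureSpace Ω] [IsProbabilityMeasure (ℙ : Measure Ω)]
    {ε mu : ℝ} (hmu : 0 < mu) {Θ : Ω → ℝ} (hΘmeas : Measurable Θ)
    (hΘlaw : Measure.map Θ ℙ =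
      ENNReal.ofReal (1 - ε) • Measure.dirac (0 : ℝ) +
        ENNReal.ofReal (ε / 2) • Measure.dirac mu +
        ENNReal.ofReal (ε / 2) • Measure.dirac (-mu)) :
    ∀ᵐ ω ∂ℙ, |Θ ω| ≤ mu := by
  have hs : MeasurableSet {x : ℝ | mu < |x|} :=
    measurableSet_lt measurable_const measurable_abs
  rw [ae_iff]
  have h1 : {ω | ¬ |Θ ω| ≤ mu} = Θ ⁻¹' {x : ℝ | mu < |x|} := by
    ext ω; simp [not_le]
  rw [h1, ← Measure.map_apply hΘmeas hs, hΘlaw]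
  simp only [Measure.coe_add, Pi.add_apply, Measure.smul_apply, smul_eq_mul]
  rw [Measure.dirac_apply' _ hs, Measure.dirac_apply' _ hs, Measure.dirac_apply' _ hs]
  have h0 : (0:ℝ) ∉ {x : ℝ | mu < |x|} := by simp [abs_of_nonneg, not_lt.2 hmu.le]
  have hmu1 : mu ∉ {x : ℝ | mu < |x|} := by simp [abs_of_nonneg hmu.le]
  have hmu2 : -mu ∉ {x : ℝ | mu < |x|} := by simp [abs_of_nonpos (neg_nonpos.2 hmu.le)]
  rw [Set.indicator_of_notMem h0, Set.indicator_of_notMem hmu1, Set.indicator_of_notMem hmu2]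
  simp


lemma aux_condexp {Ω : Type*} [MeasureSpace Ω] [IsProbabilityMeasure (ℙ : Measure Ω)]
    (ε mu δ : ℝ) (hε : 0 < ε) (hε1 : ε < 1) (hmu : 0 < mu) (hδ : 0 < δ)
    (Θ G : Ω → ℝ) (hΘmeas : Measurable Θ) (hGmeas : Measurable G)
    (hΘlaw : Measure.map Θ ℙ =
      ENNReal.ofReal (1 - ε) • Measure.dirac (0 : ℝ) +
        ENNReal.ofReal (ε / 2) • Measure.dirac mu +
        ENNReal.ofReal (ε / 2) • Measure.dirac (-mu))
    (hGlaw : Measure.map G ℙ = gaussianReal 0 1)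
    (hindep : IndepFun Θ G) (a : ℝ) :
    (fun ω => auxPhi ε mu δ (a * mu) (a * Θ ω + G ω))
      =ᵐ[ℙ] MeasureTheory.condExp
        (MeasurableSpace.comap (fun ω => a * Θ ω + G ω) inferInstance) ℙ
        (fun ω => Real.sqrt δ * Θ ω) := by
  set Y : Ω → ℝ := fun ω => a * Θ ω + G ω with hYdef
  have hY : Measurable Y := (hΘmeas.const_mul a).add hGmeas
  have hm : MeasurableSpace.comap Y inferInstance ≤ (inferInstance : MeasurableSpace Ω) :=
    hY.comap_le
  have hΘbdd := aux_theta_bdd (ε := ε) hmu hΘmeas hΘlaw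
  have hXint : Integrable (fun ω => Real.sqrt δ * Θ ω) ℙ := by
    refine (integrable_const (Real.sqrt δ * mu)).mono'
      ((hΘmeas.const_mul _).aestronglyMeasurable) ?_
    filter_upwards [hΘbdd] with ω hω
    rw [Real.norm_eq_abs, abs_mul, abs_of_nonneg (Real.sqrt_nonneg δ)]
    exact mul_le_mul_of_nonneg_left hω (Real.sqrt_nonneg δ)
  refine ae_eq_condExp_of_forall_setIntegral_eq hm hXint ?_ ?_ ?_
  · intro s _ _
    refine Integrable.integrableOn ?_
    refine (integrable_const (Real.sqrt δ * mu)).mono'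
      ((auxPhi_meas ε mu δ (a*mu)).comp hY).aestronglyMeasurable ?_
    exact Filter.Eventually.of_forall fun ω => by
      rw [Real.norm_eq_abs]; exact auxPhi_abs_le hε.le hε1 hmu.le (a*mu) (Y ω)
  · rintro s ⟨B, hB, rfl⟩ -
    have hφm : Measurable (B.indicator (auxPhi ε mu δ (a*mu))) :=
      (auxPhi_meas ε mu δ (a*mu)).indicator hB
    have hindb : ∀ y, |B.indicator (auxPhi ε mu δ (a*mu)) y| ≤ Real.sqrt δ * mu := by
      intro y
      by_cases h : y ∈ B
      · rw [Set.indicator_of_mem h]; exact auxPhi_abs_le hε.le hε1 hmu.le (a*mu) y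
      · rw [Set.indicator_of_notMem h]
        simp [mul_nonneg (Real.sqrt_nonneg δ) hmu.le]
    -- LHS
    have hL1 : ∫ x in Y ⁻¹' B, auxPhi ε mu δ (a*mu) (Y x) ∂ℙ
        = ∫ ω, B.indicator (auxPhi ε mu δ (a*mu)) (Y ω) ∂ℙ := by
      rw [← integral_indicator (hY hB)]
      congr 1
    have hLred : ∫ ω, B.indicator (auxPhi ε mu δ (a*mu)) (Y ω) ∂ℙ
        = (1-ε) * (∫ g, B.indicator (auxPhi ε mu δ (a*mu)) (a * 0 + g) ∂(gaussianReal 0 1))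
          + (ε/2) * (∫ g, B.indicator (auxPhi ε mu δ (a*mu)) (a * mu + g) ∂(gaussianReal 0 1))
          + (ε/2) * (∫ g, B.indicator (auxPhi ε mu δ (a*mu)) (a * (-mu) + g)
              ∂(gaussianReal 0 1)) :=
      aux_reduce ε mu hε.le hε1.le Θ G hΘmeas hGmeas hΘlaw hGlaw hindep
        (fun θ g => B.indicator (auxPhi ε mu δ (a*mu)) (a * θ + g))
        (hφm.comp ((measurable_fst.const_mul a).add measurable_snd))
        (Real.sqrt δ * mu) (fun θ g => hindb _)
    have e1 : ∫ g, B.indicator (auxPhi ε mu δ (a*mu)) (a * 0 + g) ∂(gaussianReal 0 1)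
        = ∫ y, gaussianPDFReal 0 1 y * B.indicator (auxPhi ε mu δ (a*mu)) y := by
      simp only [mul_zero]
      exact aux_shift 0 _ hφm
    have e2 : ∫ g, B.indicator (auxPhi ε mu δ (a*mu)) (a * mu + g) ∂(gaussianReal 0 1)
        = ∫ y, gaussianPDFReal (a*mu) 1 y * B.indicator (auxPhi ε mu δ (a*mu)) y :=
      aux_shift (a*mu) _ hφm
    have e3 : ∫ g, B.indicator (auxPhi ε mu δ (a*mu)) (a * (-mu) + g) ∂(gaussianReal 0 1)
        = ∫ y, gaussianPDFReal (-(a*mu)) 1 y * B.indicator (auxPhi ε mu δ (a*mu)) y := by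
      simp only [mul_neg]
      exact aux_shift (-(a*mu)) _ hφm
    -- RHS
    set indOne : ℝ → ℝ := B.indicator (fun _ => (1:ℝ)) with hio
    have hiom : Measurable indOne := measurable_const.indicator hB
    have hione : ∀ y, |indOne y| ≤ 1 := by
      intro y
      by_cases h : y ∈ B
      · rw [hio, Set.indicator_of_mem h]; simp
      · rw [hio, Set.indicator_of_notMem h]; simp
    set trunc : ℝ → ℝ := fun θ => max (-mu) (min θ mu) with htr
    have htrm : Measurable trunc := measurable_const.max (measurable_id.min measurable_const)
    have htrb : ∀ θ, |trunc θ| ≤ mu := fun θ => abs_le.2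
      ⟨le_max_left _ _, max_le (by linarith) (min_le_right θ mu)⟩
    have ht0 : trunc 0 = 0 := by
      rw [htr]; simp only [min_eq_left hmu.le, max_eq_right (neg_nonpos.2 hmu.le)]
    have ht1 : trunc mu = mu := by
      rw [htr]; simp only [min_self, max_eq_right (by linarith : -mu ≤ mu)]
    have ht2 : trunc (-mu) = -mu := by
      rw [htr]; simp only [min_eq_left (by linarith : -mu ≤ mu), max_self]
    have hR1 : ∫ x in Y ⁻¹' B, Real.sqrt δ * Θ x ∂ℙ
        = ∫ ω, indOne (a * Θ ω + G ω) * (Real.sqrt δ * trunc (Θ ω)) ∂ℙ := by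
      rw [← integral_indicator (hY hB)]
      refine integral_congr_ae ?_
      filter_upwards [hΘbdd] with ω hω
      have htruncω : trunc (Θ ω) = Θ ω := by
        rw [htr]
        simp only [min_eq_left (abs_le.1 hω).2, max_eq_right (abs_le.1 hω).1]
      by_cases hmem : Y ω ∈ B
      · have hmemp : ω ∈ Y ⁻¹' B := hmem
        have hmem2 : a * Θ ω + G ω ∈ B := hmem
        rw [Set.indicator_of_mem hmemp, hio, Set.indicator_of_mem hmem2, htruncω, one_mul]
      · have hmemp : ω ∉ Y ⁻¹' B := hmem
        have hmem2 : a * Θ ω + G ω ∉ B := hmem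
        rw [Set.indicator_of_notMem hmemp, hio, Set.indicator_of_notMem hmem2, zero_mul]
    have hRred : ∫ ω, indOne (a * Θ ω + G ω) * (Real.sqrt δ * trunc (Θ ω)) ∂ℙ
        = (1-ε) * (∫ g, indOne (a * 0 + g) * (Real.sqrt δ * trunc 0) ∂(gaussianReal 0 1))
          + (ε/2) * (∫ g, indOne (a * mu + g) * (Real.sqrt δ * trunc mu) ∂(gaussianReal 0 1))
          + (ε/2) * (∫ g, indOne (a * (-mu) + g) * (Real.sqrt δ * trunc (-mu))
              ∂(gaussianReal 0 1)) :=
      aux_reduce ε mu hε.le hε1.le Θ G hΘmeas hGmeas hΘlaw hGlaw hindep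
        (fun θ g => indOne (a * θ + g) * (Real.sqrt δ * trunc θ))
        ((hiom.comp ((measurable_fst.const_mul a).add measurable_snd)).mul
          ((htrm.comp measurable_fst).const_mul (Real.sqrt δ)))
        (Real.sqrt δ * mu)
        (fun θ g => by
          rw [abs_mul, abs_mul, abs_of_nonneg (Real.sqrt_nonneg δ)]
          calc |indOne (a*θ+g)| * (Real.sqrt δ * |trunc θ|)
              ≤ 1 * (Real.sqrt δ * mu) := by
                apply mul_le_mul (hione _)
                  (mul_le_mul_of_nonneg_left (htrb θ) (Real.sqrt_nonneg δ))
                  (by positivity) zero_le_one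
            _ = Real.sqrt δ * mu := one_mul _)
    have f1 : ∫ g, indOne (a * 0 + g) * (Real.sqrt δ * trunc 0) ∂(gaussianReal 0 1) = 0 := by
      simp [ht0]
    have f2 : ∫ g, indOne (a * mu + g) * (Real.sqrt δ * trunc mu) ∂(gaussianReal 0 1)
        = (∫ y, gaussianPDFReal (a*mu) 1 y * indOne y) * (Real.sqrt δ * mu) := by
      rw [ht1, integral_mul_const, aux_shift (a*mu) _ hiom]
    have f3 : ∫ g, indOne (a * (-mu) + g) * (Real.sqrt δ * trunc (-mu)) ∂(gaussianReal 0 1)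
        = (∫ y, gaussianPDFReal (-(a*mu)) 1 y * indOne y) * (Real.sqrt δ * (-mu)) := by
      rw [ht2, integral_mul_const]
      simp only [mul_neg]
      rw [aux_shift (-(a*mu)) _ hiom]
    -- integrability of pieces
    have hIL0 := aux_int_pdf_mul 0 (Real.sqrt δ * mu) _ hφm hindb
    have hILb := aux_int_pdf_mul (a*mu) (Real.sqrt δ * mu) _ hφm hindb
    have hILnb := aux_int_pdf_mul (-(a*mu)) (Real.sqrt δ * mu) _ hφm hindb
    have hIRb := aux_int_pdf_mul (a*mu) 1 _ hiom hione
    have hIRnb := aux_int_pdf_mul (-(a*mu)) 1 _ hiom hione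
    -- assemble
    rw [hL1, hLred, e1, e2, e3, hR1, hRred, f1, f2, f3]
    have hLHS : (1-ε) * (∫ y, gaussianPDFReal 0 1 y * B.indicator (auxPhi ε mu δ (a*mu)) y)
          + (ε/2) * (∫ y, gaussianPDFReal (a*mu) 1 y * B.indicator (auxPhi ε mu δ (a*mu)) y)
          + (ε/2) * (∫ y, gaussianPDFReal (-(a*mu)) 1 y * B.indicator (auxPhi ε mu δ (a*mu)) y)
        = ∫ y, ((1-ε) * (gaussianPDFReal 0 1 y * B.indicator (auxPhi ε mu δ (a*mu)) y)
            + (ε/2) * (gaussianPDFReal (a*mu) 1 y * B.indicator (auxPhi ε mu δ (a*mu)) y)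
            + (ε/2) * (gaussianPDFReal (-(a*mu)) 1 y * B.indicator (auxPhi ε mu δ (a*mu)) y)) := by
      have j0 : Integrable (fun y => (1-ε) * (gaussianPDFReal 0 1 y
          * B.indicator (auxPhi ε mu δ (a*mu)) y)) := hIL0.const_mul _
      have jb : Integrable (fun y => (ε/2) * (gaussianPDFReal (a*mu) 1 y
          * B.indicator (auxPhi ε mu δ (a*mu)) y)) := hILb.const_mul _
      have jnb : Integrable (fun y => (ε/2) * (gaussianPDFReal (-(a*mu)) 1 y
          * B.indicator (auxPhi ε mu δ (a*mu)) y)) := hILnb.const_mul _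
      have j0b : Integrable (fun y => (1-ε) * (gaussianPDFReal 0 1 y
          * B.indicator (auxPhi ε mu δ (a*mu)) y) + (ε/2) * (gaussianPDFReal (a*mu) 1 y
          * B.indicator (auxPhi ε mu δ (a*mu)) y)) := j0.add jb
      rw [integral_add j0b jnb, integral_add j0 jb,
        integral_const_mul, integral_const_mul, integral_const_mul]
    have hRHS : (1-ε) * 0
          + (ε/2) * ((∫ y, gaussianPDFReal (a*mu) 1 y * indOne y) * (Real.sqrt δ * mu))
          + (ε/2) * ((∫ y, gaussianPDFReal (-(a*mu)) 1 y * indOne y) * (Real.sqrt δ * (-mu)))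
        = ∫ y, ((ε/2) * (Real.sqrt δ * mu) * (gaussianPDFReal (a*mu) 1 y * indOne y)
            - (ε/2) * (Real.sqrt δ * mu) * (gaussianPDFReal (-(a*mu)) 1 y * indOne y)) := by
      have k1 : Integrable (fun y => (ε/2) * (Real.sqrt δ * mu)
          * (gaussianPDFReal (a*mu) 1 y * indOne y)) := hIRb.const_mul _
      have k2 : Integrable (fun y => (ε/2) * (Real.sqrt δ * mu)
          * (gaussianPDFReal (-(a*mu)) 1 y * indOne y)) := hIRnb.const_mul _
      rw [integral_sub k1 k2, integral_const_mul, integral_const_mul]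
      ring
    rw [hLHS, hRHS]
    refine integral_congr_ae (Filter.Eventually.of_forall fun y => ?_)
    beta_reduce
    by_cases h : y ∈ B
    · rw [hio, Set.indicator_of_mem h, Set.indicator_of_mem h, mul_one, mul_one]
      have := aux_key1 (ε := ε) (mu := mu) (δ := δ) hε.le hε1 (a*mu) y
      calc (1-ε) * (gaussianPDFReal 0 1 y * auxPhi ε mu δ (a*mu) y)
            + (ε/2) * (gaussianPDFReal (a*mu) 1 y * auxPhi ε mu δ (a*mu) y)
            + (ε/2) * (gaussianPDFReal (-(a*mu)) 1 y * auxPhi ε mu δ (a*mu) y)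
          = ((1-ε) * gaussianPDFReal 0 1 y + (ε/2) * gaussianPDFReal (a*mu) 1 y
              + (ε/2) * gaussianPDFReal (-(a*mu)) 1 y) * auxPhi ε mu δ (a*mu) y := by ring
        _ = (ε/2) * (Real.sqrt δ * mu)
              * (gaussianPDFReal (a*mu) 1 y - gaussianPDFReal (-(a*mu)) 1 y) := this
        _ = _ := by ring
    · rw [hio, Set.indicator_of_notMem h, Set.indicator_of_notMem h]
      ring
  · exact ((auxPhi_meas ε mu δ (a*mu)).comp
      (Measurable.of_comap_le le_rfl)).stronglyMeasurable.aestronglyMeasurable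

lemma aux_V {Ω : Type*} [MeasureSpace Ω] [IsProbabilityMeasure (ℙ : Measure Ω)]
    (ε mu δ : ℝ) (hε : 0 < ε) (hε1 : ε < 1) (hmu : 0 < mu) (hδ : 0 < δ)
    (Θ G : Ω → ℝ) (hΘmeas : Measurable Θ) (hGmeas : Measurable G)
    (hΘlaw : Measure.map Θ ℙ =
      ENNReal.ofReal (1 - ε) • Measure.dirac (0 : ℝ) +
        ENNReal.ofReal (ε / 2) • Measure.dirac mu +
        ENNReal.ofReal (ε / 2) • Measure.dirac (-mu))
    (hGlaw : Measure.map G ℙ = gaussianReal 0 1)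
    (hindep : IndepFun Θ G) (a : ℝ) :
    ∫ ω, (auxPhi ε mu δ (a*mu) (a * Θ ω + G ω))^2 ∂ℙ
      = δ * mu^2 * ε^2 * Real.exp (-(a*mu)^2)
        * ∫ y, Real.sinh ((a*mu)*y)^2 / auxD ε (a*mu) y ∂(gaussianReal 0 1) := by
  have hsq : Measurable (fun y => (auxPhi ε mu δ (a*mu) y)^2) := (auxPhi_meas ε mu δ (a*mu)).pow_const 2
  have hsqb : ∀ y, |(auxPhi ε mu δ (a*mu) y)^2| ≤ (Real.sqrt δ * mu)^2 := by
    intro y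
    rw [abs_pow]
    exact pow_le_pow_left₀ (abs_nonneg _) (auxPhi_abs_le hε.le hε1 hmu.le (a*mu) y) 2
  have hred : ∫ ω, (auxPhi ε mu δ (a*mu)) (a * Θ ω + G ω) ^ 2 ∂ℙ
      = (1-ε) * (∫ g, (auxPhi ε mu δ (a*mu)) (a * 0 + g) ^ 2 ∂(gaussianReal 0 1))
        + (ε/2) * (∫ g, (auxPhi ε mu δ (a*mu)) (a * mu + g) ^ 2 ∂(gaussianReal 0 1))
        + (ε/2) * (∫ g, (auxPhi ε mu δ (a*mu)) (a * (-mu) + g) ^ 2 ∂(gaussianReal 0 1)) :=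
    aux_reduce ε mu hε.le hε1.le Θ G hΘmeas hGmeas hΘlaw hGlaw hindep
      (fun θ g => (auxPhi ε mu δ (a*mu)) (a * θ + g) ^ 2)
      (hsq.comp ((measurable_fst.const_mul a).add measurable_snd))
      ((Real.sqrt δ * mu)^2) (fun θ g => hsqb _)
  have e1 : ∫ g, (auxPhi ε mu δ (a*mu)) (a * 0 + g) ^ 2 ∂(gaussianReal 0 1)
      = ∫ y, gaussianPDFReal 0 1 y * (auxPhi ε mu δ (a*mu) y) ^ 2 := by
    simp only [mul_zero]
    exact aux_shift 0 _ hsq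
  have e2 : ∫ g, (auxPhi ε mu δ (a*mu)) (a * mu + g) ^ 2 ∂(gaussianReal 0 1)
      = ∫ y, gaussianPDFReal (a*mu) 1 y * (auxPhi ε mu δ (a*mu) y) ^ 2 :=
    aux_shift (a*mu) _ hsq
  have e3 : ∫ g, (auxPhi ε mu δ (a*mu)) (a * (-mu) + g) ^ 2 ∂(gaussianReal 0 1)
      = ∫ y, gaussianPDFReal (-(a*mu)) 1 y * (auxPhi ε mu δ (a*mu) y) ^ 2 := by
    simp only [mul_neg]
    exact aux_shift (-(a*mu)) _ hsq
  have hIL0 := aux_int_pdf_mul 0 ((Real.sqrt δ * mu)^2) _ hsq hsqb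
  have hILb := aux_int_pdf_mul (a*mu) ((Real.sqrt δ * mu)^2) _ hsq hsqb
  have hILnb := aux_int_pdf_mul (-(a*mu)) ((Real.sqrt δ * mu)^2) _ hsq hsqb
  have j0 : Integrable (fun y => (1-ε) * (gaussianPDFReal 0 1 y
      * (auxPhi ε mu δ (a*mu) y) ^ 2)) := hIL0.const_mul _
  have jb : Integrable (fun y => (ε/2) * (gaussianPDFReal (a*mu) 1 y
      * (auxPhi ε mu δ (a*mu) y) ^ 2)) := hILb.const_mul _
  have jnb : Integrable (fun y => (ε/2) * (gaussianPDFReal (-(a*mu)) 1 y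
      * (auxPhi ε mu δ (a*mu) y) ^ 2)) := hILnb.const_mul _
  have j0b : Integrable (fun y => (1-ε) * (gaussianPDFReal 0 1 y
      * (auxPhi ε mu δ (a*mu) y) ^ 2) + (ε/2) * (gaussianPDFReal (a*mu) 1 y
      * (auxPhi ε mu δ (a*mu) y) ^ 2)) := j0.add jb
  rw [hred, e1, e2, e3, ← integral_const_mul (1-ε), ← integral_const_mul (ε/2),
    ← integral_const_mul (ε/2), ← integral_add j0 jb, ← integral_add j0b jnb]
  rw [aux_int_gauss 0, ← integral_const_mul]
  refine integral_congr_ae (Filter.Eventually.of_forall fun y => ?_)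
  beta_reduce
  have := aux_key2 (ε := ε) (mu := mu) (δ := δ) hε.le hε1 hδ.le (a*mu) y
  calc (1-ε) * (gaussianPDFReal 0 1 y * (auxPhi ε mu δ (a*mu) y) ^ 2)
      + (ε/2) * (gaussianPDFReal (a*mu) 1 y * (auxPhi ε mu δ (a*mu) y) ^ 2)
      + (ε/2) * (gaussianPDFReal (-(a*mu)) 1 y * (auxPhi ε mu δ (a*mu) y) ^ 2)
      = ((1-ε) * gaussianPDFReal 0 1 y + (ε/2) * gaussianPDFReal (a*mu) 1 y
        + (ε/2) * gaussianPDFReal (-(a*mu)) 1 y) * (auxPhi ε mu δ (a*mu) y)^2 := by ring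
    _ = δ * mu^2 * ε^2 * Real.exp (-(a*mu)^2)
        * (gaussianPDFReal 0 1 y * (Real.sinh ((a*mu)*y)^2 / auxD ε (a*mu) y)) := this

lemma aux_exp_quad {x : ℝ} (h0 : 0 ≤ x) (h1 : x ≤ 1) : Real.exp x ≤ 1 + x + x^2 := by
  have h := Real.exp_bound' h0 h1 (n := 2) (by norm_num)
  simp [Finset.sum_range_succ] at h
  nlinarith

lemma aux_upper (ε t : ℝ) (hε0 : 0 < ε) (hε1 : ε < 1) (ht0 : 0 ≤ t) (ht : t ≤ 1/3) :
    Real.sinh t / (1 - ε + ε * Real.exp (-(t/2))) - t ≤ 3 * t^2 := by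
  have h1 : 1 - t/2 ≤ Real.exp (-(t/2)) := by linarith [Real.add_one_le_exp (-(t/2))]
  have hd : 1 - t/2 ≤ 1 - ε + ε * Real.exp (-(t/2)) := by nlinarith
  have hdpos : (0:ℝ) < 1 - ε + ε * Real.exp (-(t/2)) := by nlinarith
  have he : Real.exp t ≤ 1 + t + t^2 := aux_exp_quad ht0 (by linarith)
  have he2 : 1 - t ≤ Real.exp (-t) := by linarith [Real.add_one_le_exp (-t)]
  have hsinh : Real.sinh t ≤ t + t^2 := by
    rw [Real.sinh_eq]; nlinarith [sq_nonneg t]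
  have hsnn : 0 ≤ Real.sinh t := le_trans ht0 (Real.self_le_sinh_iff.2 ht0)
  have key : Real.sinh t / (1 - ε + ε * Real.exp (-(t/2))) ≤ Real.sinh t * (1+t) := by
    rw [div_le_iff₀ hdpos]
    nlinarith [mul_le_mul_of_nonneg_left hd (mul_nonneg hsnn (by linarith : (0:ℝ) ≤ 1+t)),
      mul_nonneg (mul_nonneg hsnn ht0) (by linarith : (0:ℝ) ≤ 1 - t)]
  nlinarith [mul_nonneg ht0 ht0, mul_nonneg (mul_nonneg ht0 ht0) ht0]

lemma aux_lower (ε t : ℝ) (hε0 : 0 < ε) (hε1 : ε < 1) (ht0 : 0 ≤ t) (ht : t ≤ 1/3) :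
    -(3 * t^2) ≤ ((1+ε) * Real.sinh t - ε * ((Real.exp (3*t) - Real.exp (-t))/4)) - t := by
  have hsinh : t ≤ Real.sinh t := Real.self_le_sinh_iff.2 ht0
  have he3 : Real.exp (3*t) ≤ 1 + 3*t + 9*t^2 := by
    have := aux_exp_quad (x := 3*t) (by linarith) (by linarith)
    nlinarith
  have he2 : 1 - t ≤ Real.exp (-t) := by linarith [Real.add_one_le_exp (-t)]
  nlinarith

lemma aux_sinh_val (t : ℝ) :
    Real.exp (-t) * ((Real.exp (2*t) - 1)/2) = Real.sinh t := by
  rw [Real.sinh_eq]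
  have h1 : Real.exp (-t) * Real.exp (2*t) = Real.exp t := by
    rw [← Real.exp_add]; ring_nf
  calc Real.exp (-t) * ((Real.exp (2*t) - 1)/2)
      = (Real.exp (-t) * Real.exp (2*t) - Real.exp (-t))/2 := by ring
    _ = (Real.exp t - Real.exp (-t))/2 := by rw [h1]

lemma aux_exp_arith (t : ℝ) :
    Real.exp (-t) * (Real.exp (-(t/2)) * ((Real.exp (9*t/2) - Real.exp (t/2))/4))
      = (Real.exp (3*t) - Real.exp (-t))/4 := by
  have h1 : Real.exp (-t) * Real.exp (-(t/2)) * Real.exp (9*t/2) = Real.exp (3*t) := by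
    rw [← Real.exp_add, ← Real.exp_add]; ring_nf
  have h2 : Real.exp (-t) * Real.exp (-(t/2)) * Real.exp (t/2) = Real.exp (-t) := by
    rw [← Real.exp_add, ← Real.exp_add]; ring_nf
  calc Real.exp (-t) * (Real.exp (-(t/2)) * ((Real.exp (9*t/2) - Real.exp (t/2))/4))
      = (Real.exp (-t) * Real.exp (-(t/2)) * Real.exp (9*t/2)
          - Real.exp (-t) * Real.exp (-(t/2)) * Real.exp (t/2))/4 := by ring
    _ = (Real.exp (3*t) - Real.exp (-t))/4 := by rw [h1, h2]

lemma auxD_meas (ε b : ℝ) : Measurable (auxD ε b) := by unfold auxD; fun_prop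

lemma aux_ratio_int {ε : ℝ} (hε0 : 0 ≤ ε) (hε1 : ε < 1) (b : ℝ) :
    Integrable (fun y => Real.sinh (b*y)^2 / auxD ε b y) (gaussianReal 0 1) := by
  refine ((aux_integrable_sinh_sq b).div_const (1-ε)).mono'
    (((Real.measurable_sinh.comp (measurable_id.const_mul b)).pow_const 2).div
      (auxD_meas ε b)).aestronglyMeasurable
    (Filter.Eventually.of_forall fun y => ?_)
  have hD := auxD_pos hε0 hε1 b y
  have hDge : 1 - ε ≤ auxD ε b y := by
    have : 0 ≤ ε * Real.exp (-(b^2/2)) * Real.cosh (b*y) :=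
      mul_nonneg (mul_nonneg hε0 (Real.exp_pos _).le) (Real.cosh_pos _).le
    unfold auxD; linarith
  rw [Real.norm_eq_abs, abs_of_nonneg (div_nonneg (sq_nonneg _) hD.le)]
  exact div_le_div_of_nonneg_left (sq_nonneg _) (by linarith) hDge

lemma aux_J_le {ε : ℝ} (hε0 : 0 ≤ ε) (hε1 : ε < 1) (b d : ℝ) (hd : 0 < d)
    (hdle : ∀ y, d ≤ auxD ε b y) :
    ∫ y, Real.sinh (b*y)^2 / auxD ε b y ∂(gaussianReal 0 1)
      ≤ ((Real.exp (2 * b^2) - 1)/2) / d := by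
  have h := integral_mono (aux_ratio_int hε0 hε1 b) ((aux_integrable_sinh_sq b).div_const d)
    (fun y => by
      exact div_le_div_of_nonneg_left (sq_nonneg _) hd (hdle y))
  calc ∫ y, Real.sinh (b*y)^2 / auxD ε b y ∂(gaussianReal 0 1)
      ≤ ∫ y, Real.sinh (b*y)^2 / d ∂(gaussianReal 0 1) := h
    _ = ((Real.exp (2 * b^2) - 1)/2) / d := by
        rw [integral_div, aux_integral_sinh_sq]

lemma aux_J_ge {ε : ℝ} (hε0 : 0 ≤ ε) (hε1 : ε < 1) (b : ℝ) :
    (1+ε) * ((Real.exp (2 * b^2) - 1)/2)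
      - ε * Real.exp (-(b^2/2)) * ((Real.exp (9 * b^2 / 2) - Real.exp (b^2/2))/4)
    ≤ ∫ y, Real.sinh (b*y)^2 / auxD ε b y ∂(gaussianReal 0 1) := by
  have hint : Integrable (fun y => (1+ε) * Real.sinh (b*y)^2
      - ε * Real.exp (-(b^2/2)) * (Real.sinh (b*y)^2 * Real.cosh (b*y))) (gaussianReal 0 1) :=
    ((aux_integrable_sinh_sq b).const_mul _).sub
      ((aux_integrable_sinh_sq_cosh b).const_mul _)
  have hmono := integral_mono hint (aux_ratio_int hε0 hε1 b) (fun y => by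
    have hD := auxD_pos hε0 hε1 b y
    have hkey : (1+ε) * Real.sinh (b*y)^2
        - ε * Real.exp (-(b^2/2)) * (Real.sinh (b*y)^2 * Real.cosh (b*y))
        = (2 - auxD ε b y) * Real.sinh (b*y)^2 := by
      unfold auxD; ring
    rw [hkey, le_div_iff₀ hD]
    nlinarith [sq_nonneg (1 - auxD ε b y), sq_nonneg (Real.sinh (b*y))]
    )
  calc (1+ε) * ((Real.exp (2 * b^2) - 1)/2)
        - ε * Real.exp (-(b^2/2)) * ((Real.exp (9 * b^2 / 2) - Real.exp (b^2/2))/4)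
      = ∫ y, ((1+ε) * Real.sinh (b*y)^2
          - ε * Real.exp (-(b^2/2)) * (Real.sinh (b*y)^2 * Real.cosh (b*y)))
          ∂(gaussianReal 0 1) := by
        rw [integral_sub ((aux_integrable_sinh_sq b).const_mul _)
          ((aux_integrable_sinh_sq_cosh b).const_mul _), integral_const_mul, integral_const_mul,
          aux_integral_sinh_sq, aux_integral_sinh_sq_cosh]
    _ ≤ _ := hmono

/-- For the symmetric three-point prior (values `±μ` with probability `ε/2` each, `0`
with probability `1-ε`) and `G ∼ N(0,1)` independent, the normalized second moment of
the posterior mean `V_±(q) = E[E[√δ·Θ₀ | √(δq)·Θ₀ + G]²]/δ` satisfies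
`V_±(q) ≤ (μ²ε²/(1-ε))·sinh(δqμ²)` and `V_±(q) = μ⁴ε²δ·q + O(q²)` as `q → 0⁺`. -/
theorem stmt_19 {Ω : Type*} [MeasureSpace Ω] [IsProbabilityMeasure (ℙ : Measure Ω)]
    (ε mu δ : ℝ) (hε : 0 < ε) (hε1 : ε < 1) (hmu : 0 < mu) (hδ : 0 < δ)
    (Θ G : Ω → ℝ) (hΘmeas : Measurable Θ) (hGmeas : Measurable G)
    (hΘlaw : Measure.map Θ ℙ =
      ENNReal.ofReal (1 - ε) • Measure.dirac (0 : ℝ) +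
        ENNReal.ofReal (ε / 2) • Measure.dirac mu +
        ENNReal.ofReal (ε / 2) • Measure.dirac (-mu))
    (hGlaw : Measure.map G ℙ = gaussianReal 0 1)
    (hindep : IndepFun Θ G)
    (V : ℝ → ℝ)
    (hV : ∀ q : ℝ, V q =
      (∫ ω, (MeasureTheory.condExp
          (MeasurableSpace.comap (fun ω => Real.sqrt (δ * q) * Θ ω + G ω) inferInstance)
          ℙ (fun ω => Real.sqrt δ * Θ ω) ω) ^ 2) / δ) :
    (∀ q : ℝ, 0 ≤ q → V q ≤ (mu ^ 2 * ε ^ 2 / (1 - ε)) * Real.sinh (δ * q * mu ^ 2)) ∧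
      (fun q => V q - mu ^ 4 * ε ^ 2 * δ * q) =O[nhdsWithin 0 (Set.Ici 0)]
        (fun q => q ^ 2) := by
  have hVform : ∀ q : ℝ, 0 ≤ q → V q
      = mu^2 * ε^2 * Real.exp (-(δ*q*mu^2))
        * ∫ y, Real.sinh ((Real.sqrt (δ*q)*mu)*y)^2 / auxD ε (Real.sqrt (δ*q)*mu) y
            ∂(gaussianReal 0 1) := by
    intro q hq
    have hb2 : (Real.sqrt (δ*q)*mu)^2 = δ*q*mu^2 := by
      rw [mul_pow, Real.sq_sqrt (mul_nonneg hδ.le hq)]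
    have hce := aux_condexp ε mu δ hε hε1 hmu hδ Θ G hΘmeas hGmeas hΘlaw hGlaw hindep
      (Real.sqrt (δ*q))
    have h1 : (∫ ω, (MeasureTheory.condExp
          (MeasurableSpace.comap (fun ω => Real.sqrt (δ * q) * Θ ω + G ω) inferInstance)
          ℙ (fun ω => Real.sqrt δ * Θ ω) ω) ^ 2 ∂ℙ)
        = ∫ ω, (auxPhi ε mu δ (Real.sqrt (δ*q)*mu) (Real.sqrt (δ*q) * Θ ω + G ω))^2 ∂ℙ :=
      integral_congr_ae (hce.symm.mono fun ω h => by beta_reduce; rw [h])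
    rw [hV q, h1, aux_V ε mu δ hε hε1 hmu hδ Θ G hΘmeas hGmeas hΘlaw hGlaw hindep
      (Real.sqrt (δ*q)), hb2]
    field_simp
  have hdle1 : ∀ q : ℝ, ∀ y : ℝ, 1-ε ≤ auxD ε (Real.sqrt (δ*q)*mu) y := by
    intro q y
    have : 0 ≤ ε * Real.exp (-((Real.sqrt (δ*q)*mu)^2/2)) * Real.cosh ((Real.sqrt (δ*q)*mu)*y) :=
      mul_nonneg (mul_nonneg hε.le (Real.exp_pos _).le) (Real.cosh_pos _).le
    unfold auxD; linarith
  have hVle : ∀ q : ℝ, 0 ≤ q → ∀ d : ℝ, 0 < d →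
      (∀ y, d ≤ auxD ε (Real.sqrt (δ*q)*mu) y) →
      V q ≤ mu^2 * ε^2 * (Real.sinh (δ*q*mu^2) / d) := by
    intro q hq d hd hdle
    rw [hVform q hq]
    have hb2 : (Real.sqrt (δ*q)*mu)^2 = δ*q*mu^2 := by
      rw [mul_pow, Real.sq_sqrt (mul_nonneg hδ.le hq)]
    have hJ := aux_J_le hε.le hε1 (Real.sqrt (δ*q)*mu) d hd hdle
    rw [hb2] at hJ
    calc mu^2 * ε^2 * Real.exp (-(δ*q*mu^2))
          * ∫ y, Real.sinh ((Real.sqrt (δ*q)*mu)*y)^2 / auxD ε (Real.sqrt (δ*q)*mu) y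
              ∂(gaussianReal 0 1)
        ≤ mu^2 * ε^2 * Real.exp (-(δ*q*mu^2)) * (((Real.exp (2 * (δ*q*mu^2)) - 1)/2) / d) :=
          mul_le_mul_of_nonneg_left hJ (by positivity)
      _ = mu^2 * ε^2 * (Real.sinh (δ*q*mu^2) / d) := by
          rw [← aux_sinh_val (δ*q*mu^2)]; ring
  have hVge : ∀ q : ℝ, 0 ≤ q →
      mu^2 * ε^2 * ((1+ε) * Real.sinh (δ*q*mu^2)
        - ε * ((Real.exp (3*(δ*q*mu^2)) - Real.exp (-(δ*q*mu^2)))/4)) ≤ V q := by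
    intro q hq
    rw [hVform q hq]
    have hb2 : (Real.sqrt (δ*q)*mu)^2 = δ*q*mu^2 := by
      rw [mul_pow, Real.sq_sqrt (mul_nonneg hδ.le hq)]
    have hJ := aux_J_ge hε.le hε1 (Real.sqrt (δ*q)*mu)
    rw [hb2] at hJ
    calc mu^2 * ε^2 * ((1+ε) * Real.sinh (δ*q*mu^2)
          - ε * ((Real.exp (3*(δ*q*mu^2)) - Real.exp (-(δ*q*mu^2)))/4))
        = mu^2 * ε^2 * Real.exp (-(δ*q*mu^2))
            * ((1+ε) * ((Real.exp (2 * (δ*q*mu^2)) - 1)/2)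
              - ε * Real.exp (-(δ*q*mu^2/2))
                * ((Real.exp (9 * (δ*q*mu^2) / 2) - Real.exp (δ*q*mu^2/2))/4)) := by
          rw [← aux_sinh_val (δ*q*mu^2), ← aux_exp_arith (δ*q*mu^2)]; ring
      _ ≤ _ := mul_le_mul_of_nonneg_left hJ (by positivity)
  constructor
  · intro q hq
    have h := hVle q hq (1-ε) (by linarith) (hdle1 q)
    calc V q ≤ mu^2 * ε^2 * (Real.sinh (δ*q*mu^2) / (1-ε)) := h
      _ = (mu ^ 2 * ε ^ 2 / (1 - ε)) * Real.sinh (δ * q * mu ^ 2) := by ring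
  · rw [isBigO_iff]
    refine ⟨3 * mu^2 * ε^2 * (δ*mu^2)^2, ?_⟩
    have hq0pos : (0:ℝ) < 1/(3*δ*mu^2) := by positivity
    have hmem : Set.Icc (0:ℝ) (1/(3*δ*mu^2)) ∈ nhdsWithin 0 (Set.Ici 0) :=
      Icc_mem_nhdsGE_of_mem ⟨le_refl 0, hq0pos⟩
    filter_upwards [hmem] with q hq
    obtain ⟨hq0, hqle⟩ := hq
    have ht0 : 0 ≤ δ*q*mu^2 := by positivity
    have ht13 : δ*q*mu^2 ≤ 1/3 := by
      have h5 : δ*q*mu^2 = (δ*mu^2) * q := by ring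
      rw [h5]
      calc (δ*mu^2)*q ≤ (δ*mu^2)*(1/(3*δ*mu^2)) :=
            mul_le_mul_of_nonneg_left hqle (by positivity)
        _ = 1/3 := by field_simp
    -- upper bound
    have hdle2 : ∀ y, 1 - ε + ε * Real.exp (-(δ*q*mu^2/2))
        ≤ auxD ε (Real.sqrt (δ*q)*mu) y := by
      intro y
      have hb2 : (Real.sqrt (δ*q)*mu)^2 = δ*q*mu^2 := by
        rw [mul_pow, Real.sq_sqrt (mul_nonneg hδ.le hq0)]
      have hcosh := Real.one_le_cosh ((Real.sqrt (δ*q)*mu)*y)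
      have : ε * Real.exp (-((Real.sqrt (δ*q)*mu)^2/2)) * 1
          ≤ ε * Real.exp (-((Real.sqrt (δ*q)*mu)^2/2)) * Real.cosh ((Real.sqrt (δ*q)*mu)*y) :=
        mul_le_mul_of_nonneg_left hcosh (by positivity)
      unfold auxD
      rw [hb2] at this ⊢
      linarith
    have hdpos2 : (0:ℝ) < 1 - ε + ε * Real.exp (-(δ*q*mu^2/2)) := by
      nlinarith [Real.exp_pos (-(δ*q*mu^2/2))]
    have hub := hVle q hq0 _ hdpos2 hdle2
    have hup := aux_upper ε (δ*q*mu^2) hε hε1 ht0 ht13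
    have hlo := aux_lower ε (δ*q*mu^2) hε hε1 ht0 ht13
    have hlb := hVge q hq0
    have hmain : |V q - mu ^ 4 * ε ^ 2 * δ * q| ≤ 3 * mu^2 * ε^2 * (δ*mu^2)^2 * q^2 := by
      have heq : mu ^ 4 * ε ^ 2 * δ * q = mu^2 * ε^2 * (δ*q*mu^2) := by ring
      rw [heq, abs_le]
      constructor
      · -- lower
        have h1 : mu^2*ε^2 * (-(3 * (δ*q*mu^2)^2))
            ≤ mu^2*ε^2 * ((((1+ε) * Real.sinh (δ*q*mu^2)
              - ε * ((Real.exp (3*(δ*q*mu^2)) - Real.exp (-(δ*q*mu^2)))/4))) - (δ*q*mu^2)) :=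
          mul_le_mul_of_nonneg_left hlo (by positivity)
        have h2 : mu^2*ε^2 * (-(3 * (δ*q*mu^2)^2)) = -(3 * mu^2 * ε^2 * (δ*mu^2)^2 * q^2) := by
          ring
        nlinarith [hlb]
      · -- upper
        have h1 : mu^2*ε^2 * (Real.sinh (δ*q*mu^2) / (1 - ε + ε * Real.exp (-(δ*q*mu^2/2)))
              - (δ*q*mu^2))
            ≤ mu^2*ε^2 * (3 * (δ*q*mu^2)^2) :=
          mul_le_mul_of_nonneg_left hup (by positivity)
        nlinarith [hub]
    calc ‖V q - mu ^ 4 * ε ^ 2 * δ * q‖ = |V q - mu ^ 4 * ε ^ 2 * δ * q| := rfl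
      _ ≤ 3 * mu^2 * ε^2 * (δ*mu^2)^2 * q^2 := hmain
      _ = 3 * mu^2 * ε^2 * (δ*mu^2)^2 * ‖q^2‖ := by
          rw [Real.norm_eq_abs, abs_of_nonneg (sq_nonneg q)]

end
end
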